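/- arXiv:2510.13180 — 7 statements merged into one kernel-verified Lean document; each statement's English description precedes it below -/
import Mathlib

section
/- Let A be an m×n real matrix and let k be a natural number with 2k < spark(A). Then for each y ∈ ℝ^m there exists at most one k-sparse signal x ∈ Σ_k such that y = A x; equivalently, if x, x' ∈ ℝ^n both have at most k nonzero entries and A x = A x', then x = x'. -/
noncomputable section
open Matrix ENNReal

/-- The matrix `A ⊗ ε_γᵀ` (each column of `A` repeated `γ` consecutive times,
scaled by `1/√γ`), with the column index set `Fin n × Fin γ` flattened to `Fin (n·γ)`. -/
def kronEpsT {m n : ℕ} (A : Matrix (Fin m) (Fin n) ℝ) (γ : ℕ) :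
    Matrix (Fin m) (Fin (n * γ)) ℝ :=
  Matrix.of fun i k =>
    A i ⟨(k : ℕ) / γ, by
      have hk := k.isLt
      rcases Nat.eq_zero_or_pos γ with h | h
      · subst h; exact absurd hk (by simp)
      · exact (Nat.div_lt_iff_lt_mul h).2 hk⟩ * (Real.sqrt (γ : ℝ))⁻¹

/-- The block-sum vector `x^γ ∈ ℝⁿ` of `x ∈ ℝ^{nγ}`:
`(x^γ)_j` is the sum of the `j`-th block of `γ` consecutive entries of `x`. -/
def blockSum {n γ : ℕ} (x : Fin (n * γ) → ℝ) : Fin n → ℝ :=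
  fun j => ∑ i : Fin γ, x (finProdFinEquiv (j, i))

/-- The block-average expansion `x̄ ∈ ℝ^{nγ}`: every entry in the `j`-th block of `γ`
consecutive entries is replaced by the block average `(x^γ)_j / γ`. -/
def blockAvg {n γ : ℕ} (x : Fin (n * γ) → ℝ) : Fin (n * γ) → ℝ :=
  fun k => blockSum x (finProdFinEquiv.symm k).1 / (γ : ℝ)

/-- The spark of `A`: the smallest number of columns of `A` that form a linearly
dependent set (`⊤` if all sets of columns are linearly independent).  Equivalently,
the minimal size of the support of a nonzero vector in the kernel of `A`. -/
def spark {m n : ℕ} (A : Matrix (Fin m) (Fin n) ℝ) : ℕ∞ :=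
  sInf {c : ℕ∞ | ∃ v : Fin n → ℝ, v ≠ 0 ∧ A.mulVec v = 0 ∧
    c = ((Function.support v).ncard : ℕ∞)}

/-- The mutual coherence `μ(A)`: the largest normalized absolute inner product
between two distinct columns of `A`. -/
def coherence {m n : ℕ} (A : Matrix (Fin m) (Fin n) ℝ) : ℝ :=
  sSup {r : ℝ | ∃ i j : Fin n, i ≠ j ∧
    r = |∑ t, A t i * A t j| /
      (Real.sqrt (∑ t, A t i ^ 2) * Real.sqrt (∑ t, A t j ^ 2))}

/-- `A` satisfies the restricted isometry property of order `s` with constant `δ`. -/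
def RIP {m n : ℕ} (A : Matrix (Fin m) (Fin n) ℝ) (s : ℕ) (δ : ℝ) : Prop :=
  ∀ v : Fin n → ℝ, (Function.support v).ncard ≤ s →
    (1 - δ) * (∑ j, v j ^ 2) ≤ (∑ i, (A.mulVec v) i ^ 2) ∧
    (∑ i, (A.mulVec v) i ^ 2) ≤ (1 + δ) * (∑ j, v j ^ 2)

/-- If `2k < spark(A)` then for each `y` there is at most one `k`-sparse
`x` with `y = A x`; equivalently, `k`-sparse `x, x'` with `A x = A x'` coincide. -/
theorem spark_sparse_unique {m n k : ℕ} (A : Matrix (Fin m) (Fin n) ℝ)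
    (hk : ((2 * k : ℕ) : ℕ∞) < spark A) :
    (∀ y : Fin m → ℝ, Set.Subsingleton
        {x : Fin n → ℝ | (Function.support x).ncard ≤ k ∧ A.mulVec x = y}) ∧
    ∀ x x' : Fin n → ℝ, (Function.support x).ncard ≤ k →
      (Function.support x').ncard ≤ k → A.mulVec x = A.mulVec x' → x = x' := by
  have key : ∀ x x' : Fin n → ℝ, (Function.support x).ncard ≤ k →
      (Function.support x').ncard ≤ k → A.mulVec x = A.mulVec x' → x = x' := by
    intro x x' hx hx' hA
    by_contra hne
    set v := x - x' with hv
    have hv0 : v ≠ 0 := sub_ne_zero.mpr hne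
    have hAv : A.mulVec v = 0 := by
      simp [hv, Matrix.mulVec_sub, hA]
    have hsupp : (Function.support v).ncard ≤ 2 * k := by
      have hsub : Function.support v ⊆ Function.support x ∪ Function.support x' := by
        intro i hi
        by_contra h
        simp only [Set.mem_union, not_or] at h
        apply hi
        simp only [hv, Pi.sub_apply]
        rw [Function.notMem_support.mp h.1, Function.notMem_support.mp h.2, sub_zero]
      calc (Function.support v).ncard
          ≤ (Function.support x ∪ Function.support x').ncard :=
            Set.ncard_le_ncard hsub (Set.Finite.union (Set.toFinite _) (Set.toFinite _))
        _ ≤ (Function.support x).ncard + (Function.support x').ncard :=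
            Set.ncard_union_le _ _
        _ ≤ 2 * k := by omega
    have hmem : ((Function.support v).ncard : ℕ∞) ∈
        {c : ℕ∞ | ∃ w : Fin n → ℝ, w ≠ 0 ∧ A.mulVec w = 0 ∧
          c = ((Function.support w).ncard : ℕ∞)} := ⟨v, hv0, hAv, rfl⟩
    have hle : spark A ≤ ((Function.support v).ncard : ℕ∞) := sInf_le hmem
    have : spark A ≤ ((2 * k : ℕ) : ℕ∞) := hle.trans (by exact_mod_cast hsupp)
    exact absurd hk (not_lt.mpr this)
  refine ⟨fun y x hx x' hx' => key x x' hx.1 hx'.1 (hx.2.trans hx'.2.symm), key⟩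
end
end

section
/- Let A be an m×n real matrix, γ ≥ 1 a positive integer, and k a natural number with 2k < spark(A). Then for each y ∈ ℝ^m there exists at most one k-sparse vector z ∈ Σ_k ⊆ ℝ^n such that y = (1/√γ) A z; that is, if z, z' ∈ ℝ^n each have at most k nonzero entries and (1/√γ) A z = (1/√γ) A z', then z = z'. -/
noncomputable section
open Matrix ENNReal

/-- If `2k < spark(A)` then for each `y` there is at most one `k`-sparse
`z` with `y = (1/√γ) A z`. -/
theorem spark_sparse_unique_scaled {m n γ k : ℕ} (hγ : 1 ≤ γ)
    (A : Matrix (Fin m) (Fin n) ℝ) (hk : ((2 * k : ℕ) : ℕ∞) < spark A) :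
    (∀ y : Fin m → ℝ, Set.Subsingleton
        {z : Fin n → ℝ | (Function.support z).ncard ≤ k ∧
          (Real.sqrt (γ : ℝ))⁻¹ • A.mulVec z = y}) ∧
    ∀ z z' : Fin n → ℝ, (Function.support z).ncard ≤ k →
      (Function.support z').ncard ≤ k →
      (Real.sqrt (γ : ℝ))⁻¹ • A.mulVec z = (Real.sqrt (γ : ℝ))⁻¹ • A.mulVec z' →
      z = z' := by

  have key : ∀ z z' : Fin n → ℝ, (Function.support z).ncard ≤ k →
      (Function.support z').ncard ≤ k →
      (Real.sqrt (γ : ℝ))⁻¹ • A.mulVec z = (Real.sqrt (γ : ℝ))⁻¹ • A.mulVec z' →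
      z = z' := by
    intro z z' hz hz' heq
    have hγ0 : (Real.sqrt (γ : ℝ))⁻¹ ≠ 0 := by
      have : (0:ℝ) < Real.sqrt γ := Real.sqrt_pos.2 (by exact_mod_cast hγ)
      positivity
    have hAeq : A.mulVec z = A.mulVec z' := by
      have := congrArg (fun w => (Real.sqrt (γ : ℝ)) • w) heq
      simpa [smul_smul, mul_inv_cancel₀ (by
        have : (0:ℝ) < Real.sqrt γ := Real.sqrt_pos.2 (by exact_mod_cast hγ)
        exact ne_of_gt this)] using this
    by_contra hne
    set v : Fin n → ℝ := z - z' with hv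
    have hvne : v ≠ 0 := sub_ne_zero.2 hne
    have hAv : A.mulVec v = 0 := by
      simp [hv, Matrix.mulVec_sub, hAeq]
    have hmem : ((Function.support v).ncard : ℕ∞) ∈
        {c : ℕ∞ | ∃ w : Fin n → ℝ, w ≠ 0 ∧ A.mulVec w = 0 ∧
          c = ((Function.support w).ncard : ℕ∞)} := ⟨v, hvne, hAv, rfl⟩
    have hle : spark A ≤ ((Function.support v).ncard : ℕ∞) := sInf_le hmem
    have hsub : Function.support v ⊆ Function.support z ∪ Function.support z' := by
      intro i hi
      by_contra h
      simp only [Set.mem_union, Function.mem_support, not_or, not_not] at h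
      apply hi
      simp [hv, h.1, h.2]
    have hcard : (Function.support v).ncard ≤ 2 * k := by
      calc (Function.support v).ncard
          ≤ (Function.support z ∪ Function.support z').ncard :=
            Set.ncard_le_ncard hsub (Set.toFinite _)
        _ ≤ (Function.support z).ncard + (Function.support z').ncard :=
            Set.ncard_union_le _ _
        _ ≤ k + k := add_le_add hz hz'
        _ = 2 * k := (two_mul k).symm
    have : ((2 * k : ℕ) : ℕ∞) < ((2 * k : ℕ) : ℕ∞) :=
      lt_of_lt_of_le (lt_of_lt_of_le hk hle) (by exact_mod_cast hcard)
    exact absurd this (lt_irrefl _)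
  refine ⟨?_, key⟩
  intro y z hz z' hz'
  exact key z z' hz.1 hz'.1 (hz.2.trans hz'.2.symm)
end
end

section
/- Let A be an m×n real matrix, γ ≥ 1, and k a natural number with 2k < spark(A). If x, x' ∈ ℝ^{nγ} are both k-sparse and (A ⊗ ε_γ^T) x = (A ⊗ ε_γ^T) x', then their block-sum vectors agree: x^γ = x'^γ. In other words, the DK-STP measurement y = (A ⊗ ε_γ^T) x uniquely determines the block-sum vector x^γ of any k-sparse input x. -/
noncomputable section
open Matrix ENNReal

lemma mulVec_kronEpsT {m n γ : ℕ} (hγ : 1 ≤ γ) (A : Matrix (Fin m) (Fin n) ℝ)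
    (x : Fin (n * γ) → ℝ) :
    (kronEpsT A γ).mulVec x = fun i => (Real.sqrt γ)⁻¹ * (A.mulVec (blockSum x)) i := by
  funext i
  simp only [Matrix.mulVec, dotProduct, kronEpsT, Matrix.of_apply, blockSum, Finset.mul_sum]
  rw [← (finProdFinEquiv (m := n) (n := γ)).sum_comp
    (fun kk => A i ⟨(kk : ℕ) / γ, _⟩ * (Real.sqrt (γ : ℝ))⁻¹ * x kk)]
  rw [Fintype.sum_prod_type]
  refine Finset.sum_congr rfl fun j _ => ?_
  refine Finset.sum_congr rfl fun i' _ => ?_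
  have hdiv : ((finProdFinEquiv (j, i') : Fin (n * γ)) : ℕ) / γ = j := by
    show ((i' : ℕ) + γ * j) / γ = j
    rw [Nat.add_mul_div_left _ _ (Nat.lt_of_lt_of_le Nat.zero_lt_one hγ),
      Nat.div_eq_of_lt i'.isLt, Nat.zero_add]
  have hidx : (⟨((finProdFinEquiv (j, i') : Fin (n * γ)) : ℕ) / γ, by omega⟩ : Fin n) = j :=
    Fin.ext hdiv
  rw [hidx]
  ring

lemma blockSum_support {n γ : ℕ} (x : Fin (n * γ) → ℝ) :
    Function.support (blockSum x) ⊆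
      (fun kk : Fin (n * γ) => (finProdFinEquiv.symm kk).1) '' Function.support x := by
  intro j hj
  have : ∃ i : Fin γ, x (finProdFinEquiv (j, i)) ≠ 0 := by
    by_contra hc
    push_neg at hc
    exact hj (by simp [blockSum, hc])
  obtain ⟨i, hi⟩ := this
  exact ⟨finProdFinEquiv (j, i), hi, by simp⟩

/-- If `2k < spark(A)`, the DK-STP measurement `(A ⊗ ε_γᵀ) x` determines
the block-sum vector `x^γ` of any `k`-sparse `x`. -/
theorem dkstp_measurement_determines_blockSum {m n γ k : ℕ} (hγ : 1 ≤ γ)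
    (A : Matrix (Fin m) (Fin n) ℝ) (hk : ((2 * k : ℕ) : ℕ∞) < spark A)
    (x x' : Fin (n * γ) → ℝ)
    (hx : (Function.support x).ncard ≤ k) (hx' : (Function.support x').ncard ≤ k)
    (h : (kronEpsT A γ).mulVec x = (kronEpsT A γ).mulVec x') :
    blockSum x = blockSum x' := by
  have hs : (Real.sqrt γ)⁻¹ ≠ 0 := by
    simp only [ne_eq, inv_eq_zero]
    exact Real.sqrt_ne_zero'.2 (by exact_mod_cast Nat.lt_of_lt_of_le Nat.zero_lt_one hγ)
  have hAv : A.mulVec (blockSum x) = A.mulVec (blockSum x') := by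
    funext i
    have := congrFun h i
    rw [mulVec_kronEpsT hγ A x, mulVec_kronEpsT hγ A x'] at this
    exact mul_left_cancel₀ hs this
  by_contra hne
  set v : Fin n → ℝ := blockSum x - blockSum x' with hv
  have hv0 : v ≠ 0 := sub_ne_zero.2 hne
  have hAv0 : A.mulVec v = 0 := by
    rw [hv, Matrix.mulVec_sub, hAv, sub_self]
  have hmem : ((Function.support v).ncard : ℕ∞) ∈
      {c : ℕ∞ | ∃ w : Fin n → ℝ, w ≠ 0 ∧ A.mulVec w = 0 ∧
        c = ((Function.support w).ncard : ℕ∞)} := ⟨v, hv0, hAv0, rfl⟩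
  have hle : spark A ≤ ((Function.support v).ncard : ℕ∞) := sInf_le hmem
  have hcard : (Function.support v).ncard ≤ 2 * k := by
    have hsub : Function.support v ⊆
        Function.support (blockSum x) ∪ Function.support (blockSum x') := by
      intro j hj
      by_contra hc
      simp only [Set.mem_union, Function.mem_support, not_or, not_not] at hc
      exact hj (by simp [hv, hc.1, hc.2])
    have h1 : (Function.support (blockSum x)).ncard ≤ k := by
      calc (Function.support (blockSum x)).ncard
          ≤ ((fun kk : Fin (n * γ) => (finProdFinEquiv.symm kk).1) ''
              Function.support x).ncard :=
            Set.ncard_le_ncard (blockSum_support x) (Set.toFinite _)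
        _ ≤ (Function.support x).ncard := Set.ncard_image_le (Set.toFinite _)
        _ ≤ k := hx
    have h1' : (Function.support (blockSum x')).ncard ≤ k := by
      calc (Function.support (blockSum x')).ncard
          ≤ ((fun kk : Fin (n * γ) => (finProdFinEquiv.symm kk).1) ''
              Function.support x').ncard :=
            Set.ncard_le_ncard (blockSum_support x') (Set.toFinite _)
        _ ≤ (Function.support x').ncard := Set.ncard_image_le (Set.toFinite _)
        _ ≤ k := hx'
    calc (Function.support v).ncard
        ≤ (Function.support (blockSum x) ∪ Function.support (blockSum x')).ncard :=
          Set.ncard_le_ncard hsub (Set.toFinite _)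
      _ ≤ (Function.support (blockSum x)).ncard +
          (Function.support (blockSum x')).ncard :=
          Set.ncard_union_le _ _
      _ ≤ 2 * k := by omega
  exact absurd (hle.trans (by exact_mod_cast hcard)) (not_le.2 hk)
end
end

section
/- Let A be an m×n real matrix with nonzero columns, γ ≥ 1, and k a natural number with k < (1/2)(1 + 1/μ(A)). Then for each y ∈ ℝ^m there exists at most one k-sparse vector z ∈ Σ_k ⊆ ℝ^n such that y = (1/√γ) A z; that is, if z, z' ∈ ℝ^n each have at most k nonzero entries and (1/√γ) A z = (1/√γ) A z', then z = z'. -/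
noncomputable section
open Matrix ENNReal

/-- If `k < (1/2)(1 + 1/μ(A))` then for each `y` there is at most one
`k`-sparse `z` with `y = (1/√γ) A z`. -/
theorem coherence_sparse_unique {m n γ k : ℕ} (hγ : 1 ≤ γ)
    (A : Matrix (Fin m) (Fin n) ℝ) (hA : ∀ j : Fin n, (fun i => A i j) ≠ 0)
    (hμ : 0 < coherence A)
    (hk : (k : ℝ) < (1 / 2) * (1 + 1 / coherence A)) :
    (∀ y : Fin m → ℝ, Set.Subsingleton
        {z : Fin n → ℝ | (Function.support z).ncard ≤ k ∧
          (Real.sqrt (γ : ℝ))⁻¹ • A.mulVec z = y}) ∧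
    ∀ z z' : Fin n → ℝ, (Function.support z).ncard ≤ k →
      (Function.support z').ncard ≤ k →
      (Real.sqrt (γ : ℝ))⁻¹ • A.mulVec z = (Real.sqrt (γ : ℝ))⁻¹ • A.mulVec z' →
      z = z' := by
  classical
  set M := coherence A with hM
  -- column norms are positive
  have hpos : ∀ j : Fin n, 0 < ∑ t, A t j ^ 2 := by
    intro j
    obtain ⟨t, ht⟩ : ∃ t, A t j ≠ 0 := by
      by_contra h
      push_neg at h
      exact hA j (funext h)
    exact Finset.sum_pos' (fun t _ => sq_nonneg _)
      ⟨t, Finset.mem_univ t, by positivity⟩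
  set c := fun j : Fin n => Real.sqrt (∑ t, A t j ^ 2) with hc
  have hcpos : ∀ j, 0 < c j := fun j => Real.sqrt_pos.2 (hpos j)
  have hcsq : ∀ j, c j ^ 2 = ∑ t, A t j ^ 2 := fun j => Real.sq_sqrt (hpos j).le
  -- key coherence bound
  have key : ∀ i j : Fin n, i ≠ j → |∑ t, A t i * A t j| ≤ M * (c i * c j) := by
    intro i j hij
    have hbdd : BddAbove {r : ℝ | ∃ i j : Fin n, i ≠ j ∧
        r = |∑ t, A t i * A t j| /
          (Real.sqrt (∑ t, A t i ^ 2) * Real.sqrt (∑ t, A t j ^ 2))} := by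
      refine ⟨1, fun r hr => ?_⟩
      obtain ⟨a, b, hab, rfl⟩ := hr
      have h2 := Finset.sum_mul_sq_le_sq_mul_sq Finset.univ (fun t => A t a) (fun t => A t b)
      have hca := hcpos a
      have hcb := hcpos b
      have h1 : |∑ t, A t a * A t b| ≤ c a * c b := by
        have h3 := Real.sqrt_le_sqrt h2
        rw [Real.sqrt_sq_eq_abs, Real.sqrt_mul (by positivity)] at h3
        exact h3
      rw [div_le_one (mul_pos hca hcb)]
      exact h1
    have hmem : |∑ t, A t i * A t j| / (c i * c j) ≤ M := by
      rw [hM, coherence]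
      exact le_csSup hbdd ⟨i, j, hij, rfl⟩
    exact (div_le_iff₀ (mul_pos (hcpos i) (hcpos j))).1 hmem
  -- kernel vectors with small support are zero
  have kerzero : ∀ v : Fin n → ℝ, A.mulVec v = 0 →
      (Function.support v).ncard ≤ 2 * k → v = 0 := by
    intro v hv hsup
    set w := fun j => v j * c j with hw
    -- the quadratic form vanishes
    have h0 : ∑ j : Fin n, ∑ l : Fin n, (v j * v l) * (∑ t, A t j * A t l) = 0 := by
      have e1 : ∀ t, (∑ j, A t j * v j) = 0 := by
        intro t
        have := congrFun hv t
        simpa [Matrix.mulVec, dotProduct] using this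
      calc ∑ j : Fin n, ∑ l : Fin n, (v j * v l) * (∑ t, A t j * A t l)
          = ∑ j : Fin n, ∑ t : Fin m, ∑ l : Fin n, (v j * v l) * (A t j * A t l) := by
            refine Finset.sum_congr rfl fun j _ => ?_
            simp_rw [Finset.mul_sum]
            exact Finset.sum_comm
        _ = ∑ t : Fin m, ∑ j : Fin n, ∑ l : Fin n, (v j * v l) * (A t j * A t l) :=
            Finset.sum_comm
        _ = ∑ t : Fin m, (∑ j, A t j * v j) * (∑ l, A t l * v l) := by
            refine Finset.sum_congr rfl fun t _ => ?_
            rw [Finset.sum_mul_sum]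
            exact Finset.sum_congr rfl fun j _ => Finset.sum_congr rfl fun l _ => by ring
        _ = 0 := by simp [e1]
    have hdiag : ∀ j : Fin n, (v j * v j) * (∑ t, A t j * A t j) = w j ^ 2 := by
      intro j
      have h1 : ∑ t, A t j * A t j = ∑ t, A t j ^ 2 := by
        exact Finset.sum_congr rfl fun t _ => (sq (A t j)).symm
      rw [h1, ← hcsq j, hw]
      ring
    have hwabs : ∀ j, |w j| = |v j| * c j := by
      intro j
      rw [hw, abs_mul, abs_of_pos (hcpos j)]
    have hoff : ∀ j l : Fin n, j ≠ l →
        -(M * (|w j| * |w l|)) ≤ (v j * v l) * (∑ t, A t j * A t l) := by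
      intro j l hjl
      have h1 := key j l hjl
      have h2 : |(v j * v l) * (∑ t, A t j * A t l)| ≤ M * (|w j| * |w l|) := by
        rw [abs_mul, abs_mul]
        calc |v j| * |v l| * |∑ t, A t j * A t l|
            ≤ |v j| * |v l| * (M * (c j * c l)) :=
              mul_le_mul_of_nonneg_left h1 (by positivity)
          _ = M * ((|v j| * c j) * (|v l| * c l)) := by ring
          _ = M * (|w j| * |w l|) := by rw [hwabs j, hwabs l]
      linarith [neg_abs_le ((v j * v l) * (∑ t, A t j * A t l))]
    -- lower bound
    have hlow : ∑ j : Fin n, ∑ l : Fin n,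
        (if j = l then w j ^ 2 else -(M * (|w j| * |w l|)))
        ≤ ∑ j : Fin n, ∑ l : Fin n, (v j * v l) * (∑ t, A t j * A t l) := by
      refine Finset.sum_le_sum fun j _ => Finset.sum_le_sum fun l _ => ?_
      by_cases h : j = l
      · subst h
        rw [if_pos rfl, hdiag j]
      · rw [if_neg h]
        exact hoff j l h
    have habs2 : ∀ j : Fin n, |w j| * |w j| = w j ^ 2 := by
      intro j; rw [abs_mul_abs_self, sq]
    have hLHS : ∑ j : Fin n, ∑ l : Fin n,
        (if j = l then w j ^ 2 else -(M * (|w j| * |w l|)))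
        = (1 + M) * (∑ j, w j ^ 2) - M * (∑ j, |w j|) ^ 2 := by
      have e : ∀ j l : Fin n, (if j = l then w j ^ 2 else -(M * (|w j| * |w l|)))
          = (if l = j then w j ^ 2 + M * (|w j| * |w l|) else 0) - M * (|w j| * |w l|) := by
        intro j l
        by_cases h : j = l
        · subst h
          rw [if_pos rfl, if_pos rfl]
          ring
        · rw [if_neg h, if_neg (Ne.symm h)]
          ring
      simp_rw [e, Finset.sum_sub_distrib, Finset.sum_ite_eq']
      have e2 : ∑ j : Fin n, ∑ l : Fin n, M * (|w j| * |w l|)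
          = M * (∑ j, |w j|) ^ 2 := by
        rw [sq, Finset.sum_mul_sum]
        simp_rw [Finset.mul_sum]
      rw [e2]
      have e3 : ∑ j : Fin n, (if j ∈ Finset.univ then w j ^ 2 + M * (|w j| * |w j|) else 0)
          = (1 + M) * ∑ j, w j ^ 2 := by
        simp only [Finset.mem_univ, if_true, habs2]
        rw [Finset.sum_add_distrib, ← Finset.mul_sum]
        ring
      rw [e3]
    -- Cauchy-Schwarz on the support
    set F := (Set.toFinite (Function.support v)).toFinset with hF
    have hFcard : F.card ≤ 2 * k := by
      rwa [Set.ncard_eq_toFinset_card] at hsup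
    have hSsum : ∑ j, |w j| = ∑ j ∈ F, |w j| := by
      refine (Finset.sum_subset F.subset_univ fun x _ hx => ?_).symm
      have hvx : v x = 0 := by
        by_contra hvx
        exact hx ((Set.Finite.mem_toFinset _).2 hvx)
      simp [hw, hvx]
    have hCS : (∑ j ∈ F, |w j|) ^ 2 ≤ (F.card : ℝ) * ∑ j ∈ F, w j ^ 2 := by
      have h2 := Finset.sum_mul_sq_le_sq_mul_sq F (fun _ => (1:ℝ)) (fun j => |w j|)
      simp only [one_pow, one_mul, mul_one, Finset.sum_const, nsmul_eq_mul, sq_abs] at h2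
      exact h2
    have hle : ∑ j ∈ F, w j ^ 2 ≤ ∑ j, w j ^ 2 :=
      Finset.sum_le_sum_of_subset_of_nonneg F.subset_univ fun _ _ _ => sq_nonneg _
    have hWnn : (0:ℝ) ≤ ∑ j, w j ^ 2 := Finset.sum_nonneg fun _ _ => sq_nonneg _
    have hS2 : (∑ j, |w j|) ^ 2 ≤ (2 * k : ℝ) * ∑ j, w j ^ 2 := by
      rw [hSsum]
      calc (∑ j ∈ F, |w j|) ^ 2 ≤ (F.card : ℝ) * ∑ j ∈ F, w j ^ 2 := hCS
        _ ≤ (2 * k : ℝ) * ∑ j, w j ^ 2 := by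
            apply mul_le_mul
            · exact_mod_cast hFcard
            · exact hle
            · exact Finset.sum_nonneg fun _ _ => sq_nonneg _
            · positivity
    have hcoef : 2 * (k:ℝ) * M < 1 + M := by
      have h1 : (k:ℝ) * M < (1/2) * (1 + 1/M) * M := by
        exact mul_lt_mul_of_pos_right hk hμ
      have h2 : (1/2) * (1 + 1/M) * M = (M + 1) / 2 := by
        field_simp
      nlinarith
    have hW0 : ∑ j, w j ^ 2 ≤ 0 := by
      have hchain : (1 + M) * (∑ j, w j ^ 2) - M * (∑ j, |w j|) ^ 2 ≤ 0 := by
        rw [← hLHS]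
        calc _ ≤ _ := hlow
          _ = 0 := h0
      nlinarith [hS2, hWnn, hμ]
    have hWzero : ∑ j, w j ^ 2 = 0 := le_antisymm hW0 hWnn
    funext j
    have hwj : w j ^ 2 = 0 :=
      (Finset.sum_eq_zero_iff_of_nonneg fun i _ => sq_nonneg (w i)).1 hWzero j
        (Finset.mem_univ j)
    have : w j = 0 := by
      have := sq_eq_zero_iff.1 hwj
      exact this
    have hvj : v j * c j = 0 := this
    have := (mul_eq_zero.1 hvj).resolve_right (hcpos j).ne'
    simpa using this
  -- main uniqueness
  have hsqrtγ : (0:ℝ) < Real.sqrt γ := by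
    apply Real.sqrt_pos.2
    exact_mod_cast Nat.lt_of_lt_of_le Nat.zero_lt_one hγ
  have main : ∀ z z' : Fin n → ℝ, (Function.support z).ncard ≤ k →
      (Function.support z').ncard ≤ k →
      (Real.sqrt (γ : ℝ))⁻¹ • A.mulVec z = (Real.sqrt (γ : ℝ))⁻¹ • A.mulVec z' →
      z = z' := by
    intro z z' hz hz' heq
    have hγ' : ((Real.sqrt (γ:ℝ))⁻¹ : ℝ) ≠ 0 := inv_ne_zero hsqrtγ.ne'
    have h2 : A.mulVec z = A.mulVec z' :=
      smul_right_injective (Fin m → ℝ) hγ' heq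
    have hAv : A.mulVec (z - z') = 0 := by
      rw [Matrix.mulVec_sub, h2, sub_self]
    have hsupp : (Function.support (z - z')).ncard ≤ 2 * k := by
      calc (Function.support (z - z')).ncard
          ≤ (Function.support z ∪ Function.support z').ncard :=
            Set.ncard_le_ncard (Function.support_sub z z') (Set.toFinite _)
        _ ≤ (Function.support z).ncard + (Function.support z').ncard :=
            Set.ncard_union_le _ _
        _ ≤ 2 * k := by omega
    exact sub_eq_zero.1 (kerzero (z - z') hAv hsupp)
  refine ⟨fun y z hz z' hz' => ?_, main⟩
  exact main z z' hz.1 hz'.1 (hz.2.trans hz'.2.symm)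
end
end

section
/- Let A be an m×n real matrix satisfying the restricted isometry property of order 2k with constant δ_{2k} < √2 − 1, and let x ∈ ℝ^n be k-sparse. Then x is the unique solution of the ℓ₁ minimization problem: for every z ∈ ℝ^n with A z = A x and z ≠ x, one has ‖x‖₁ < ‖z‖₁; in particular x = argmin { ‖z‖₁ : A z = A x }. -/
noncomputable section
open Matrix ENNReal

lemma dot_expand {m n : ℕ} (A : Matrix (Fin m) (Fin n) ℝ) (u v : Fin n → ℝ) :
    ∑ i, (A.mulVec u) i * (A.mulVec v) i
      = (∑ i, (A.mulVec (u + v)) i ^ 2 - ∑ i, (A.mulVec (u - v)) i ^ 2) / 4 := by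
  simp only [Matrix.mulVec_add, Matrix.mulVec_sub, Pi.add_apply, Pi.sub_apply]
  rw [eq_div_iff (by norm_num : (4:ℝ) ≠ 0), ← Finset.sum_sub_distrib, Finset.sum_mul]
  apply Finset.sum_congr rfl; intro i _; ring

lemma sumsq_disjoint {n : ℕ} (u v : Fin n → ℝ)
    (hd : ∀ j, u j = 0 ∨ v j = 0) :
    (∑ j, (u j + v j) ^ 2) = ∑ j, u j ^2 + ∑ j, v j ^ 2 ∧
    (∑ j, (u j - v j) ^ 2) = ∑ j, u j ^2 + ∑ j, v j ^ 2 := by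
  have h : ∀ j, u j * v j = 0 := fun j => by rcases hd j with h | h <;> simp [h]
  constructor <;>
  · rw [← Finset.sum_add_distrib]
    apply Finset.sum_congr rfl
    intro j _
    rcases hd j with h | h <;> simp [h] <;> ring

lemma cross_weak {m n k : ℕ} {A : Matrix (Fin m) (Fin n) ℝ} {δ : ℝ}
    (hRIP : RIP A (2 * k) δ) {u v : Fin n → ℝ}
    (hu : (Function.support u).ncard ≤ k) (hv : (Function.support v).ncard ≤ k)
    (hd : ∀ j, u j = 0 ∨ v j = 0) :
    |∑ i, (A.mulVec u) i * (A.mulVec v) i| ≤ δ / 2 * (∑ j, u j ^ 2 + ∑ j, v j ^ 2) := by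
  have hsupp : ∀ w : Fin n → ℝ, Function.support w ⊆ Function.support u ∪ Function.support v →
      (Function.support w).ncard ≤ 2 * k := by
    intro w hw
    calc (Function.support w).ncard ≤ (Function.support u ∪ Function.support v).ncard :=
          Set.ncard_le_ncard hw (Set.toFinite _)
      _ ≤ (Function.support u).ncard + (Function.support v).ncard :=
          Set.ncard_union_le _ _
      _ ≤ 2 * k := by omega
  have hadd : (Function.support (u + v)).ncard ≤ 2 * k := by
    apply hsupp; intro j hj
    simp only [Function.mem_support, Pi.add_apply] at hj
    by_contra hc
    simp only [Set.mem_union, Function.mem_support, not_or, not_not] at hc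
    exact hj (by rw [hc.1, hc.2]; ring)
  have hsub : (Function.support (u - v)).ncard ≤ 2 * k := by
    apply hsupp; intro j hj
    simp only [Function.mem_support, Pi.sub_apply] at hj
    by_contra hc
    simp only [Set.mem_union, Function.mem_support, not_or, not_not] at hc
    exact hj (by rw [hc.1, hc.2]; ring)
  obtain ⟨hps, hpn⟩ := sumsq_disjoint u v hd
  have h1 := hRIP (u + v) hadd
  have h2 := hRIP (u - v) hsub
  simp only [Pi.add_apply, Pi.sub_apply] at h1 h2 hps hpn
  rw [dot_expand, abs_le]
  rw [hps] at h1; rw [hpn] at h2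
  constructor <;> nlinarith [h1.1, h1.2, h2.1, h2.2]

lemma cross_strong {m n k : ℕ} {A : Matrix (Fin m) (Fin n) ℝ} {δ : ℝ} (hδ0 : 0 < δ)
    (hRIP : RIP A (2 * k) δ) {u v : Fin n → ℝ}
    (hu : (Function.support u).ncard ≤ k) (hv : (Function.support v).ncard ≤ k)
    (hd : ∀ j, u j = 0 ∨ v j = 0) :
    |∑ i, (A.mulVec u) i * (A.mulVec v) i| ≤
      δ * Real.sqrt (∑ j, u j ^ 2) * Real.sqrt (∑ j, v j ^ 2) := by
  set U := ∑ j, u j ^ 2 with hU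
  set V := ∑ j, v j ^ 2 with hV
  have hU0 : 0 ≤ U := Finset.sum_nonneg fun j _ => sq_nonneg _
  have hV0 : 0 ≤ V := Finset.sum_nonneg fun j _ => sq_nonneg _
  rcases eq_or_lt_of_le hU0 with hU0' | hUpos
  · have hu0 : u = 0 := by
      funext j
      have := (Finset.sum_eq_zero_iff_of_nonneg (fun j _ => sq_nonneg (u j))).1 hU0'.symm j
        (Finset.mem_univ j)
      exact pow_eq_zero_iff (by norm_num) |>.1 this
    simp [hu0, Matrix.mulVec_zero]
    positivity
  rcases eq_or_lt_of_le hV0 with hV0' | hVpos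
  · have hv0 : v = 0 := by
      funext j
      have := (Finset.sum_eq_zero_iff_of_nonneg (fun j _ => sq_nonneg (v j))).1 hV0'.symm j
        (Finset.mem_univ j)
      exact pow_eq_zero_iff (by norm_num) |>.1 this
    simp [hv0, Matrix.mulVec_zero]
    positivity
  set c : ℝ := Real.sqrt (Real.sqrt V / Real.sqrt U) with hc
  have hcpos : 0 < c := Real.sqrt_pos.2 (div_pos (Real.sqrt_pos.2 hVpos) (Real.sqrt_pos.2 hUpos))
  have hsu : (Function.support (c • u)).ncard ≤ k := by
    rwa [Function.support_const_smul_of_ne_zero _ _ (ne_of_gt hcpos)]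
  have hsv : (Function.support (c⁻¹ • v)).ncard ≤ k := by
    rwa [Function.support_const_smul_of_ne_zero _ _ (ne_of_gt (inv_pos.2 hcpos))]
  have hdd : ∀ j, (c • u) j = 0 ∨ (c⁻¹ • v) j = 0 := by
    intro j
    rcases hd j with h | h
    · left; simp [h]
    · right; simp [h]
  have hkey := cross_weak (u := c • u) (v := c⁻¹ • v) hRIP hsu hsv hdd
  · have e1 : A.mulVec (c • u) = c • A.mulVec u := by rw [Matrix.mulVec_smul]
    have e2 : A.mulVec (c⁻¹ • v) = c⁻¹ • A.mulVec v := by rw [Matrix.mulVec_smul]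
    have e3 : ∑ i, (A.mulVec (c • u)) i * (A.mulVec (c⁻¹ • v)) i
        = ∑ i, (A.mulVec u) i * (A.mulVec v) i := by
      rw [e1, e2]
      simp only [Pi.smul_apply, smul_eq_mul]
      apply Finset.sum_congr rfl
      intro i _
      rw [show c * (A.mulVec u) i * (c⁻¹ * (A.mulVec v) i)
          = (c * c⁻¹) * ((A.mulVec u) i * (A.mulVec v) i) from by ring,
        mul_inv_cancel₀ (ne_of_gt hcpos), one_mul]
    have e4 : ∑ j, (c • u) j ^ 2 = c ^ 2 * U := by
      simp only [Pi.smul_apply, smul_eq_mul, mul_pow, hU]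
      rw [Finset.mul_sum]
    have e5 : ∑ j, (c⁻¹ • v) j ^ 2 = (c ^ 2)⁻¹ * V := by
      simp only [Pi.smul_apply, smul_eq_mul, mul_pow, hV, inv_pow]
      rw [Finset.mul_sum]
    rw [e3, e4, e5] at hkey
    have hc2 : c ^ 2 = Real.sqrt V / Real.sqrt U :=
      Real.sq_sqrt (le_of_lt (div_pos (Real.sqrt_pos.2 hVpos) (Real.sqrt_pos.2 hUpos)))
    have hsU : Real.sqrt U > 0 := Real.sqrt_pos.2 hUpos
    have hsV : Real.sqrt V > 0 := Real.sqrt_pos.2 hVpos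
    have hUeq : U = Real.sqrt U * Real.sqrt U := (Real.mul_self_sqrt hU0).symm
    have hVeq : V = Real.sqrt V * Real.sqrt V := (Real.mul_self_sqrt hV0).symm
    have e6 : c ^ 2 * U = Real.sqrt U * Real.sqrt V := by
      rw [hc2, div_mul_eq_mul_div, div_eq_iff hsU.ne']; linear_combination Real.sqrt V * hUeq
    have e7 : (c ^ 2)⁻¹ * V = Real.sqrt U * Real.sqrt V := by
      rw [hc2, inv_div, div_mul_eq_mul_div, div_eq_iff hsV.ne']; linear_combination Real.sqrt U * hVeq
    rw [e6, e7] at hkey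
    calc |∑ i, (A.mulVec u) i * (A.mulVec v) i|
        ≤ δ / 2 * (Real.sqrt U * Real.sqrt V + Real.sqrt U * Real.sqrt V) := hkey
      _ = δ * Real.sqrt U * Real.sqrt V := by ring

lemma block_mem_iff {n k : ℕ} (hk : 0 < k) (j : ℕ) (i : Fin n) :
    (i : ℕ) / k = j ↔ j * k ≤ (i : ℕ) ∧ (i : ℕ) < j * k + k := by
  constructor
  · intro h
    refine ⟨(Nat.le_div_iff_mul_le hk).1 (le_of_eq h.symm), ?_⟩
    have h2 : (i : ℕ) / k < j + 1 := by omega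
    have h3 := (Nat.div_lt_iff_lt_mul hk).1 h2
    rw [add_mul, one_mul] at h3
    omega
  · intro ⟨h1, h2⟩
    exact Nat.div_eq_of_lt_le h1 (by rw [add_mul, one_mul]; omega)

lemma block_card_le {n k : ℕ} (hk : 0 < k) (j : ℕ) :
    (Finset.univ.filter (fun i : Fin n => (i : ℕ) / k = j)).card ≤ k := by
  have := Finset.card_le_card_of_injOn (fun i : Fin n => (i : ℕ))
    (s := Finset.univ.filter (fun i : Fin n => (i : ℕ) / k = j))
    (t := Finset.Ico (j * k) (j * k + k))
    (fun i hi => by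
      simp only [Finset.mem_coe, Finset.mem_filter, Finset.mem_univ, true_and] at hi
      simp only [Finset.mem_coe, Finset.mem_Ico]
      exact (block_mem_iff hk j i).1 hi)
    (fun a _ b _ hab => Fin.val_injective hab)
  simpa using this

lemma block_card_eq {n k : ℕ} (hk : 0 < k) (j : ℕ) (hjn : j * k + k ≤ n) :
    (Finset.univ.filter (fun i : Fin n => (i : ℕ) / k = j)).card = k := by
  apply le_antisymm (block_card_le hk j)
  have := Finset.card_le_card_of_injOn (fun a : ℕ => (⟨a % n, Nat.mod_lt _ (by omega)⟩ : Fin n))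
    (s := Finset.Ico (j * k) (j * k + k))
    (t := Finset.univ.filter (fun i : Fin n => (i : ℕ) / k = j))
    (fun a ha => by
      simp only [Finset.mem_coe, Finset.mem_Ico] at ha
      have han : a < n := by omega
      simp only [Finset.mem_coe, Finset.mem_filter, Finset.mem_univ, true_and]
      show a % n / k = j
      rw [Nat.mod_eq_of_lt han]
      exact Nat.div_eq_of_lt_le ha.1 (by rw [add_mul, one_mul]; omega))
    (fun a ha b hb hab => by
      simp only [Finset.coe_Ico, Set.mem_Ico] at ha hb
      have : a % n = b % n := congrArg Fin.val hab
      rwa [Nat.mod_eq_of_lt (by omega), Nat.mod_eq_of_lt (by omega)] at this)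
  simpa using this

lemma sum_block_reindex {n k : ℕ} (σ : Equiv.Perm (Fin n)) (j : ℕ) (F : Fin n → ℝ) :
    ∑ t, (if ((σ.symm t : Fin n) : ℕ) / k = j then F t else 0)
      = ∑ i ∈ Finset.univ.filter (fun i : Fin n => (i : ℕ) / k = j), F (σ i) := by
  rw [← Finset.sum_filter]
  apply Finset.sum_bij' (i := fun t _ => σ.symm t) (j := fun i _ => σ i)
  · intro t ht
    simp only [Finset.mem_filter, Finset.mem_univ, true_and] at ht ⊢
    exact ht
  · intro i hi
    simp only [Finset.mem_filter, Finset.mem_univ, true_and, Equiv.symm_apply_apply] at hi ⊢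
    exact hi
  · intro t _; simp
  · intro i _; simp
  · intro t _; simp

lemma block_bound {n k : ℕ} (hk : 0 < k) (h' : Fin n → ℝ) (σ : Equiv.Perm (Fin n))
    (hanti : ∀ i i' : Fin n, i ≤ i' → |h' (σ i')| ≤ |h' (σ i)|)
    (j : ℕ) (hj : 1 ≤ j) :
    Real.sqrt (∑ t, (if ((σ.symm t : Fin n) : ℕ) / k = j then h' t else 0) ^ 2)
      ≤ (∑ t, |if ((σ.symm t : Fin n) : ℕ) / k = j - 1 then h' t else 0|) / Real.sqrt k := by
  have hL1e : (∑ t, |if ((σ.symm t : Fin n) : ℕ) / k = j - 1 then h' t else 0|)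
      = ∑ i ∈ Finset.univ.filter (fun i : Fin n => (i : ℕ) / k = j - 1), |h' (σ i)| := by
    rw [← sum_block_reindex σ (j-1) (fun t => |h' t|)]
    apply Finset.sum_congr rfl
    intro t _
    rw [apply_ite abs, abs_zero]
  set L1 : ℝ := ∑ t, |if ((σ.symm t : Fin n) : ℕ) / k = j - 1 then h' t else 0| with hL1
  have hL1nonneg : 0 ≤ L1 := Finset.sum_nonneg fun t _ => abs_nonneg _
  have hsq : (∑ t, (if ((σ.symm t : Fin n) : ℕ) / k = j then h' t else 0) ^ 2)
      = ∑ i ∈ Finset.univ.filter (fun i : Fin n => (i : ℕ) / k = j), h' (σ i) ^ 2 := by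
    rw [← sum_block_reindex σ j (fun t => h' t ^ 2)]
    apply Finset.sum_congr rfl
    intro t _
    rw [apply_ite (· ^ 2)]
    simp
  rw [hsq]
  rcases Finset.eq_empty_or_nonempty
      (Finset.univ.filter (fun i : Fin n => (i : ℕ) / k = j)) with he | ⟨i0, hi0⟩
  · rw [he]
    simp only [Finset.sum_empty, Real.sqrt_zero]
    positivity
  · have hj' : (j - 1) + 1 = j := Nat.succ_pred_eq_of_pos hj
    simp only [Finset.mem_filter, Finset.mem_univ, true_and] at hi0
    have hi0' := (block_mem_iff hk j i0).1 hi0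
    have hfull : (j - 1) * k + k ≤ n := by
      have h1 : (j - 1) * k + k = j * k := by
        calc (j - 1) * k + k = ((j - 1) + 1) * k := by ring
          _ = j * k := by rw [hj']
      have := i0.isLt
      omega
    have hcardfull := block_card_eq (n := n) hk (j - 1) hfull
    -- every element of block j has |h' (σ i)| ≤ L1 / k
    have hMb : ∀ i ∈ Finset.univ.filter (fun i : Fin n => (i : ℕ) / k = j),
        |h' (σ i)| ≤ L1 / k := by
      intro i hi
      simp only [Finset.mem_filter, Finset.mem_univ, true_and] at hi
      have hi' := (block_mem_iff hk j i).1 hi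
      have hle : ∀ i' ∈ Finset.univ.filter (fun i : Fin n => (i : ℕ) / k = j - 1),
          |h' (σ i)| ≤ |h' (σ i')| := by
        intro i' hi'mem
        simp only [Finset.mem_filter, Finset.mem_univ, true_and] at hi'mem
        have hb := (block_mem_iff hk (j-1) i').1 hi'mem
        apply hanti
        rw [Fin.le_def]
        have h1 : (j - 1) * k + k = j * k := by
          calc (j - 1) * k + k = ((j - 1) + 1) * k := by ring
            _ = j * k := by rw [hj']
        omega
      have hsum : (k : ℝ) * |h' (σ i)| ≤ L1 := by
        rw [hL1e]
        calc (k : ℝ) * |h' (σ i)|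
            = ∑ _i' ∈ Finset.univ.filter (fun i : Fin n => (i : ℕ) / k = j - 1),
              |h' (σ i)| := by
              rw [Finset.sum_const, hcardfull, nsmul_eq_mul]
          _ ≤ _ := Finset.sum_le_sum hle
      rw [le_div_iff₀ (by exact_mod_cast hk)]
      linarith [hsum]
    have hsum2 : ∑ i ∈ Finset.univ.filter (fun i : Fin n => (i : ℕ) / k = j), h' (σ i) ^ 2
        ≤ (k : ℝ) * (L1 / k) ^ 2 := by
      calc ∑ i ∈ Finset.univ.filter (fun i : Fin n => (i : ℕ) / k = j), h' (σ i) ^ 2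
          ≤ ∑ i ∈ Finset.univ.filter (fun i : Fin n => (i : ℕ) / k = j), (L1 / k) ^ 2 := by
            apply Finset.sum_le_sum
            intro i hi
            have h1 := hMb i hi
            have h2 : h' (σ i) ^ 2 = |h' (σ i)| ^ 2 := (sq_abs _).symm
            rw [h2]
            exact pow_le_pow_left₀ (abs_nonneg _) h1 2
        _ = ((Finset.univ.filter (fun i : Fin n => (i : ℕ) / k = j)).card : ℝ) * (L1/k)^2 := by
            rw [Finset.sum_const, nsmul_eq_mul]
        _ ≤ (k : ℝ) * (L1 / k) ^ 2 := by
            apply mul_le_mul_of_nonneg_right _ (sq_nonneg _)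
            exact_mod_cast block_card_le hk j
    have hkpos : (0:ℝ) < k := by exact_mod_cast hk
    calc Real.sqrt (∑ i ∈ Finset.univ.filter (fun i : Fin n => (i : ℕ) / k = j), h' (σ i) ^ 2)
        ≤ Real.sqrt ((k : ℝ) * (L1 / k) ^ 2) := Real.sqrt_le_sqrt hsum2
      _ = L1 / Real.sqrt k := by
          rw [Real.sqrt_mul (le_of_lt hkpos), Real.sqrt_sq (by positivity)]
          have hss : Real.sqrt k * Real.sqrt k = (k:ℝ) := Real.mul_self_sqrt (le_of_lt hkpos)
          have hsne : Real.sqrt (k:ℝ) ≠ 0 := by positivity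
          field_simp
          linear_combination L1 * hss

set_option maxHeartbeats 1600000 in
/-- If `A` satisfies the RIP of order `2k` with constant
`δ_{2k} < √2 − 1` and `x` is `k`-sparse, then `x` is the unique `ℓ₁` minimizer among
all solutions of `A z = A x`. -/
theorem rip_l1_unique_minimizer {m n k : ℕ} (A : Matrix (Fin m) (Fin n) ℝ) (δ : ℝ)
    (hδ0 : 0 < δ) (hδ1 : δ < 1) (hδ : δ < Real.sqrt 2 - 1) (hRIP : RIP A (2 * k) δ)
    (x : Fin n → ℝ) (hx : (Function.support x).ncard ≤ k) :
    ∀ z : Fin n → ℝ, A.mulVec z = A.mulVec x → z ≠ x →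
      (∑ j, |x j|) < ∑ j, |z j| := by
  intro z hAz hzx
  by_contra hcon
  push_neg at hcon
  rcases Nat.eq_zero_or_pos n with hn0 | hn
  · exact hzx (funext fun j => absurd j.isLt (by omega))
  set h : Fin n → ℝ := z - x with hhdef
  have hh0 : h ≠ 0 := sub_ne_zero.2 hzx
  have hht : ∀ t, h t = z t - x t := fun t => rfl
  have hAh : A.mulVec h = 0 := by rw [hhdef, Matrix.mulVec_sub, hAz, sub_self]
  rcases Nat.eq_zero_or_pos k with hk0 | hk
  · subst hk0
    have hx0 : x = 0 :=
      Function.support_eq_empty_iff.1 ((Set.ncard_eq_zero (Set.toFinite _)).1 (Nat.le_zero.1 hx))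
    have hz0 : z ≠ 0 := by rwa [hx0] at hzx
    obtain ⟨j0, hj0⟩ := Function.ne_iff.1 hz0
    have h2 : 0 < ∑ j, |z j| := by
      have hzj : 0 < |z j0| := abs_pos.2 hj0
      have := Finset.single_le_sum (f := fun j => |z j|) (fun j _ => abs_nonneg _)
        (Finset.mem_univ j0)
      linarith
    have h1 : ∑ j, |x j| = 0 := by simp [hx0]
    linarith
  classical
  set xs : Fin n → ℝ := fun t => if x t = 0 then 0 else h t with hxsdef
  set h' : Fin n → ℝ := fun t => if x t = 0 then h t else 0 with hh'def
  have hsplit : ∀ t, h t = xs t + h' t := by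
    intro t; by_cases hxt : x t = 0 <;> simp [hxsdef, hh'def, hxt]
  set σ : Equiv.Perm (Fin n) := Tuple.sort (fun i => -|h' i|) with hσdef
  have hanti : ∀ i i' : Fin n, i ≤ i' → |h' (σ i')| ≤ |h' (σ i)| := by
    intro i i' hii
    have := Tuple.monotone_sort (fun i => -|h' i|) hii
    simp only [Function.comp_apply, ← hσdef] at this
    simpa using this
  set u : ℕ → Fin n → ℝ := fun j t => if ((σ.symm t : Fin n) : ℕ) / k = j then h' t else 0
    with hudef
  have hqmem : ∀ t : Fin n, ((σ.symm t : Fin n) : ℕ) / k ∈ Finset.range n :=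
    fun t => Finset.mem_range.2 (lt_of_le_of_lt (Nat.div_le_self _ _) (σ.symm t).isLt)
  have hdecomp : ∀ t, h' t = ∑ j ∈ Finset.range n, u j t := by
    intro t
    simp only [hudef]
    rw [Finset.sum_ite_eq (Finset.range n) _ (fun _ => h' t), if_pos (hqmem t)]
  have hdecompabs : ∀ t, |h' t| = ∑ j ∈ Finset.range n, |u j t| := by
    intro t
    have e : ∀ j, |u j t| = if ((σ.symm t : Fin n) : ℕ) / k = j then |h' t| else 0 := by
      intro j; simp only [hudef]; rw [apply_ite abs, abs_zero]
    rw [Finset.sum_congr rfl (fun j _ => e j),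
      Finset.sum_ite_eq (Finset.range n) _ (fun _ => |h' t|), if_pos (hqmem t)]
  have hsuppxs : (Function.support xs).ncard ≤ k := by
    refine le_trans (Set.ncard_le_ncard ?_ (Set.toFinite _)) hx
    intro t ht
    simp only [Function.mem_support] at ht ⊢
    intro hxt
    exact ht (by simp [hxsdef, hxt])
  have hFcard : ∀ j : ℕ,
      (Finset.univ.filter (fun t : Fin n => ((σ.symm t : Fin n) : ℕ) / k = j)).card
      = (Finset.univ.filter (fun i : Fin n => (i : ℕ) / k = j)).card := by
    intro j
    apply Finset.card_bij (fun t _ => σ.symm t)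
    · intro t ht
      simp only [Finset.mem_filter, Finset.mem_univ, true_and] at ht ⊢
      exact ht
    · intro a _ b _ hab
      exact σ.symm.injective hab
    · intro i hi
      refine ⟨σ i, ?_, by simp⟩
      simp only [Finset.mem_filter, Finset.mem_univ, true_and, Equiv.symm_apply_apply] at hi ⊢
      exact hi
  have hsuppu : ∀ j : ℕ, (Function.support (u j)).ncard ≤ k := by
    intro j
    have hsub : Function.support (u j) ⊆
        ↑(Finset.univ.filter (fun t : Fin n => ((σ.symm t : Fin n) : ℕ) / k = j)) := by
      intro t ht
      simp only [Function.mem_support, hudef] at ht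
      simp only [Finset.coe_filter, Set.mem_setOf_eq, Finset.mem_univ, true_and]
      by_contra hc
      exact ht (if_neg hc)
    calc (Function.support (u j)).ncard
        ≤ _ := Set.ncard_le_ncard hsub (Set.toFinite _)
      _ = (Finset.univ.filter (fun t : Fin n => ((σ.symm t : Fin n) : ℕ) / k = j)).card :=
          Set.ncard_coe_finset _
      _ ≤ k := by rw [hFcard j]; exact block_card_le hk j
  have hdisj_xu : ∀ (j : ℕ) t, xs t = 0 ∨ u j t = 0 := by
    intro j t
    by_cases hxt : x t = 0
    · left; simp [hxsdef, hxt]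
    · right; simp only [hudef, hh'def, if_neg hxt, ite_self]
  have hdisj_uu : ∀ j j' : ℕ, j ≠ j' → ∀ t, u j t = 0 ∨ u j' t = 0 := by
    intro j j' hjj t
    by_cases hq : ((σ.symm t : Fin n) : ℕ) / k = j
    · right
      simp only [hudef]
      exact if_neg (by rw [hq]; exact hjj)
    · left
      simp only [hudef]
      exact if_neg hq
  have hcone : ∑ t, |h' t| ≤ ∑ t, |xs t| := by
    have hpt : ∀ t, |x t| + |h' t| - |xs t| ≤ |z t| := by
      intro t
      by_cases hxt : x t = 0
      · simp [hxsdef, hh'def, hxt, hht t]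
      · simp only [hxsdef, hh'def, if_neg hxt, abs_zero]
        have h1 : |x t| - |z t| ≤ |x t - z t| := abs_sub_abs_le_abs_sub _ _
        have h2 : |x t - z t| = |h t| := by rw [hht t, abs_sub_comm]
        linarith
    have hs := Finset.sum_le_sum (fun t (_ : t ∈ Finset.univ) => hpt t)
    simp only [Finset.sum_sub_distrib, Finset.sum_add_distrib] at hs
    linarith
  have hxsnn : (0:ℝ) ≤ ∑ t, xs t ^ 2 := Finset.sum_nonneg fun t _ => sq_nonneg _
  have hu0nn : (0:ℝ) ≤ ∑ t, u 0 t ^ 2 := Finset.sum_nonneg fun t _ => sq_nonneg _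
  have hcauchy : ∑ t, |xs t| ≤ Real.sqrt k * Real.sqrt (∑ t, xs t ^ 2) := by
    set S : Finset (Fin n) := Finset.univ.filter (fun t => xs t ≠ 0) with hSdef
    have hSsum : ∑ t, |xs t| = ∑ t ∈ S, |xs t| := by
      symm
      apply Finset.sum_subset (Finset.subset_univ S)
      intro t _ ht
      simp only [hSdef, Finset.mem_filter, Finset.mem_univ, true_and, not_not] at ht
      simp [ht]
    have hScard : (S.card : ℝ) ≤ k := by
      have he : (↑S : Set (Fin n)) = Function.support xs := by
        ext t; simp [hSdef, Function.mem_support]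
      have := Set.ncard_coe_finset S
      rw [he] at this
      exact_mod_cast this ▸ (by exact_mod_cast hsuppxs : ((Function.support xs).ncard : ℝ) ≤ k)
    have hcs := sq_sum_le_card_mul_sum_sq (s := S) (f := fun t => |xs t|)
    have habs2 : ∑ t ∈ S, |xs t| ^ 2 = ∑ t ∈ S, xs t ^ 2 := by
      exact Finset.sum_congr rfl fun t _ => sq_abs _
    have hsub2 : ∑ t ∈ S, xs t ^ 2 ≤ ∑ t, xs t ^ 2 :=
      Finset.sum_le_sum_of_subset_of_nonneg (Finset.subset_univ S)
        (fun t _ _ => sq_nonneg _)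
    have hkey : (∑ t, |xs t|) ^ 2 ≤ (k : ℝ) * ∑ t, xs t ^ 2 := by
      rw [hSsum]
      calc (∑ t ∈ S, |xs t|) ^ 2 ≤ (S.card : ℝ) * ∑ t ∈ S, |xs t| ^ 2 := hcs
        _ ≤ (k : ℝ) * ∑ t, xs t ^ 2 := by
            rw [habs2]
            apply mul_le_mul hScard hsub2 (Finset.sum_nonneg fun t _ => sq_nonneg _)
              (by positivity)
    have hnn : (0:ℝ) ≤ ∑ t, |xs t| := Finset.sum_nonneg fun t _ => abs_nonneg _
    calc ∑ t, |xs t| = Real.sqrt ((∑ t, |xs t|) ^ 2) := (Real.sqrt_sq hnn).symm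
      _ ≤ Real.sqrt ((k : ℝ) * ∑ t, xs t ^ 2) := Real.sqrt_le_sqrt hkey
      _ = Real.sqrt k * Real.sqrt (∑ t, xs t ^ 2) := Real.sqrt_mul (by positivity) _
  set w : Fin n → ℝ := fun t => xs t + u 0 t with hwdef
  have hsuppw : (Function.support w).ncard ≤ 2 * k := by
    have hsub : Function.support w ⊆ Function.support xs ∪ Function.support (u 0) := by
      intro t ht
      simp only [Function.mem_support, hwdef] at ht
      by_contra hc
      simp only [Set.mem_union, Function.mem_support, not_or, not_not] at hc
      exact ht (by rw [hc.1, hc.2, add_zero])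
    calc (Function.support w).ncard
        ≤ (Function.support xs ∪ Function.support (u 0)).ncard :=
          Set.ncard_le_ncard hsub (Set.toFinite _)
      _ ≤ (Function.support xs).ncard + (Function.support (u 0)).ncard :=
          Set.ncard_union_le _ _
      _ ≤ k + k := add_le_add hsuppxs (hsuppu 0)
      _ = 2 * k := by ring
  have hW : ∑ t, w t ^ 2 = ∑ t, xs t ^ 2 + ∑ t, u 0 t ^ 2 := by
    simp only [hwdef]
    exact (sumsq_disjoint xs (u 0) (hdisj_xu 0)).1
  have hAsplit : ∀ i, A.mulVec w i + ∑ j ∈ Finset.Ico 1 n, A.mulVec (u j) i = 0 := by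
    intro i
    have h0 : A.mulVec h i = 0 := by rw [hAh]; rfl
    have e1 : ∀ t, h t = w t + ∑ j ∈ Finset.Ico 1 n, u j t := by
      intro t
      rw [hsplit t, hdecomp t, Finset.range_eq_Ico,
        Finset.sum_eq_sum_Ico_succ_bot hn (fun j => u j t)]
      simp only [hwdef]
      ring
    have e2 : A.mulVec h i = A.mulVec w i + ∑ j ∈ Finset.Ico 1 n, A.mulVec (u j) i := by
      calc A.mulVec h i = ∑ t, A i t * h t := rfl
        _ = ∑ t, A i t * (w t + ∑ j ∈ Finset.Ico 1 n, u j t) :=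
          Finset.sum_congr rfl fun t _ => by rw [e1 t]
        _ = ∑ t, (A i t * w t + ∑ j ∈ Finset.Ico 1 n, A i t * u j t) :=
          Finset.sum_congr rfl fun t _ => by rw [mul_add, Finset.mul_sum]
        _ = ∑ t, A i t * w t + ∑ j ∈ Finset.Ico 1 n, ∑ t, A i t * u j t := by
          rw [Finset.sum_add_distrib, Finset.sum_comm]
        _ = A.mulVec w i + ∑ j ∈ Finset.Ico 1 n, A.mulVec (u j) i := rfl
    rw [← e2, h0]
  have hEw : ∑ i, (A.mulVec w) i ^ 2
      = ∑ j ∈ Finset.Ico 1 n, (-(∑ i, (A.mulVec w) i * (A.mulVec (u j)) i)) := by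
    have e : ∀ i, (A.mulVec w) i ^ 2
        = ∑ j ∈ Finset.Ico 1 n, (-((A.mulVec w) i * (A.mulVec (u j)) i)) := by
      intro i
      have h1 := hAsplit i
      have h2 : (A.mulVec w) i = -∑ j ∈ Finset.Ico 1 n, (A.mulVec (u j)) i := by linarith
      calc (A.mulVec w) i ^ 2 = (A.mulVec w) i * (A.mulVec w) i := sq _
        _ = (A.mulVec w) i * (-∑ j ∈ Finset.Ico 1 n, (A.mulVec (u j)) i) := by rw [← h2]
        _ = ∑ j ∈ Finset.Ico 1 n, (-((A.mulVec w) i * (A.mulVec (u j)) i)) := by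
          rw [mul_neg, Finset.mul_sum, ← Finset.sum_neg_distrib]
    rw [Finset.sum_congr rfl (fun i _ => e i), Finset.sum_comm]
    exact Finset.sum_congr rfl fun j _ => by rw [← Finset.sum_neg_distrib]
  have hterm : ∀ j ∈ Finset.Ico 1 n, (-(∑ i, (A.mulVec w) i * (A.mulVec (u j)) i))
      ≤ δ * (Real.sqrt (∑ t, xs t ^ 2) + Real.sqrt (∑ t, u 0 t ^ 2))
        * Real.sqrt (∑ t, u j t ^ 2) := by
    intro j hj
    rw [Finset.mem_Ico] at hj
    have hsplitw : A.mulVec w = A.mulVec xs + A.mulVec (u 0) := by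
      rw [show w = xs + u 0 from rfl, Matrix.mulVec_add]
    have hD : ∑ i, (A.mulVec w) i * (A.mulVec (u j)) i
        = ∑ i, (A.mulVec xs) i * (A.mulVec (u j)) i
          + ∑ i, (A.mulVec (u 0)) i * (A.mulVec (u j)) i := by
      rw [hsplitw, ← Finset.sum_add_distrib]
      exact Finset.sum_congr rfl fun i _ => by simp [add_mul]
    have hc1 := cross_strong hδ0 hRIP hsuppxs (hsuppu j) (hdisj_xu j)
    have hc2 := cross_strong hδ0 hRIP (hsuppu 0) (hsuppu j) (hdisj_uu 0 j (by omega))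
    rw [hD]
    have h1 := (abs_le.1 hc1).1
    have h2 := (abs_le.1 hc2).1
    have hr : δ * (Real.sqrt (∑ t, xs t ^ 2) + Real.sqrt (∑ t, u 0 t ^ 2))
        * Real.sqrt (∑ t, u j t ^ 2)
        = δ * Real.sqrt (∑ t, xs t ^ 2) * Real.sqrt (∑ t, u j t ^ 2)
          + δ * Real.sqrt (∑ t, u 0 t ^ 2) * Real.sqrt (∑ t, u j t ^ 2) := by ring
    linarith
  have hknR : (0:ℝ) < Real.sqrt k := Real.sqrt_pos.2 (by exact_mod_cast hk)
  have hS : ∑ j ∈ Finset.Ico 1 n, Real.sqrt (∑ t, u j t ^ 2)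
      ≤ (∑ t, |h' t|) / Real.sqrt k := by
    have h1 : ∀ j ∈ Finset.Ico 1 n, Real.sqrt (∑ t, u j t ^ 2)
        ≤ (∑ t, |u (j-1) t|) / Real.sqrt k := by
      intro j hj
      rw [Finset.mem_Ico] at hj
      have := block_bound hk h' σ hanti j hj.1
      simpa only [hudef] using this
    have e1 : ∑ j ∈ Finset.Ico 1 n, ∑ t, |u (j-1) t|
        = ∑ j ∈ Finset.range (n-1), ∑ t, |u j t| := by
      rw [Finset.sum_Ico_eq_sum_range]
      apply Finset.sum_congr rfl
      intro i _
      have : 1 + i - 1 = i := by omega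
      rw [this]
    have e2 : ∑ j ∈ Finset.range (n-1), ∑ t, |u j t| ≤ ∑ j ∈ Finset.range n, ∑ t, |u j t| :=
      Finset.sum_le_sum_of_subset_of_nonneg (Finset.range_subset_range.2 (by omega))
        (fun j _ _ => Finset.sum_nonneg fun t _ => abs_nonneg _)
    have e3 : ∑ j ∈ Finset.range n, ∑ t, |u j t| = ∑ t, |h' t| := by
      rw [Finset.sum_comm]
      exact Finset.sum_congr rfl fun t _ => (hdecompabs t).symm
    calc ∑ j ∈ Finset.Ico 1 n, Real.sqrt (∑ t, u j t ^ 2)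
        ≤ ∑ j ∈ Finset.Ico 1 n, (∑ t, |u (j-1) t|) / Real.sqrt k := Finset.sum_le_sum h1
      _ = (∑ j ∈ Finset.Ico 1 n, ∑ t, |u (j-1) t|) / Real.sqrt k := by
          rw [Finset.sum_div]
      _ ≤ (∑ t, |h' t|) / Real.sqrt k := by
          gcongr
          rw [e1]
          exact le_trans e2 (le_of_eq e3)
  -- final assembly
  set a := Real.sqrt (∑ t, xs t ^ 2) with hadef
  set b := Real.sqrt (∑ t, u 0 t ^ 2) with hbdef
  set W := ∑ t, w t ^ 2 with hWdef
  have hWnn : (0:ℝ) ≤ W := Finset.sum_nonneg fun t _ => sq_nonneg _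
  have ha2 : a ^ 2 = ∑ t, xs t ^ 2 := Real.sq_sqrt hxsnn
  have hb2 : b ^ 2 = ∑ t, u 0 t ^ 2 := Real.sq_sqrt hu0nn
  have hann : 0 ≤ a := Real.sqrt_nonneg _
  have hbnn : 0 ≤ b := Real.sqrt_nonneg _
  have haW : a ≤ Real.sqrt W := by
    apply Real.sqrt_le_sqrt
    rw [hW]; linarith
  have hWs : Real.sqrt W * Real.sqrt W = W := Real.mul_self_sqrt hWnn
  have hab : a + b ≤ Real.sqrt 2 * Real.sqrt W := by
    have hsq : (a + b) ^ 2 ≤ 2 * W := by nlinarith [sq_nonneg (a - b), hW, ha2, hb2]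
    calc a + b = Real.sqrt ((a + b) ^ 2) := (Real.sqrt_sq (by linarith)).symm
      _ ≤ Real.sqrt (2 * W) := Real.sqrt_le_sqrt hsq
      _ = Real.sqrt 2 * Real.sqrt W := Real.sqrt_mul (by norm_num) _
  have hSfin : ∑ j ∈ Finset.Ico 1 n, Real.sqrt (∑ t, u j t ^ 2) ≤ a := by
    have h2 : (∑ t, |h' t|) / Real.sqrt k ≤ (∑ t, |xs t|) / Real.sqrt k :=
      div_le_div_of_nonneg_right hcone hknR.le
    have h3 : (∑ t, |xs t|) / Real.sqrt k ≤ (Real.sqrt k * a) / Real.sqrt k :=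
      div_le_div_of_nonneg_right hcauchy hknR.le
    have h4 : (Real.sqrt k * a) / Real.sqrt k = a := by field_simp
    linarith [hS]
  have hup : ∑ i, (A.mulVec w) i ^ 2 ≤ δ * (a + b) * a := by
    calc ∑ i, (A.mulVec w) i ^ 2
        = ∑ j ∈ Finset.Ico 1 n, (-(∑ i, (A.mulVec w) i * (A.mulVec (u j)) i)) := hEw
      _ ≤ ∑ j ∈ Finset.Ico 1 n, δ * (a + b) * Real.sqrt (∑ t, u j t ^ 2) :=
          Finset.sum_le_sum hterm
      _ = δ * (a + b) * ∑ j ∈ Finset.Ico 1 n, Real.sqrt (∑ t, u j t ^ 2) := by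
          rw [Finset.mul_sum]
      _ ≤ δ * (a + b) * a :=
          mul_le_mul_of_nonneg_left hSfin
            (mul_nonneg (le_of_lt hδ0) (by positivity))
  have hlow := (hRIP w hsuppw).1
  have hchain : (1 - δ) * W ≤ Real.sqrt 2 * δ * W := by
    have s1 : δ * (a + b) * a ≤ δ * (a + b) * Real.sqrt W :=
      mul_le_mul_of_nonneg_left haW (mul_nonneg (le_of_lt hδ0) (by positivity))
    have s2 : δ * (a + b) * Real.sqrt W ≤ δ * (Real.sqrt 2 * Real.sqrt W) * Real.sqrt W := by
      apply mul_le_mul_of_nonneg_right _ (Real.sqrt_nonneg _)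
      exact mul_le_mul_of_nonneg_left hab (le_of_lt hδ0)
    have s3 : δ * (Real.sqrt 2 * Real.sqrt W) * Real.sqrt W = Real.sqrt 2 * δ * W := by
      linear_combination Real.sqrt 2 * δ * hWs
    calc (1 - δ) * W ≤ ∑ i, (A.mulVec w) i ^ 2 := hlow
      _ ≤ δ * (a + b) * a := hup
      _ ≤ Real.sqrt 2 * δ * W := by linarith
  have hsq2 : Real.sqrt 2 * Real.sqrt 2 = 2 := Real.mul_self_sqrt (by norm_num)
  have hcoef : Real.sqrt 2 * δ < 1 - δ := by nlinarith [Real.sqrt_nonneg 2]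
  have hWeq : W = 0 := by nlinarith
  have hxs2 : ∑ t, xs t ^ 2 = 0 := by
    linarith [hW, hWeq, hu0nn, hxsnn]
  have hxs0 : ∀ t, xs t = 0 := by
    intro t
    have := (Finset.sum_eq_zero_iff_of_nonneg (fun t _ => sq_nonneg (xs t))).1 hxs2 t
      (Finset.mem_univ t)
    exact pow_eq_zero_iff (by norm_num) |>.1 this
  have hxsabs : ∑ t, |xs t| = 0 := by
    apply Finset.sum_eq_zero
    intro t _
    rw [hxs0 t, abs_zero]
  have hh'0 : ∀ t, h' t = 0 := by
    have h1 : ∑ t, |h' t| = 0 := le_antisymm (by linarith)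
      (Finset.sum_nonneg fun t _ => abs_nonneg _)
    intro t
    have := (Finset.sum_eq_zero_iff_of_nonneg (fun t _ => abs_nonneg (h' t))).1 h1 t
      (Finset.mem_univ t)
    exact abs_eq_zero.1 this
  apply hh0
  funext t
  show h t = 0
  rw [hsplit t, hxs0 t, hh'0 t, add_zero]
end
end

section
/- Let A be an m×n real matrix satisfying the restricted isometry property of order 2k with constant δ_{2k} < √2 − 1, let γ ≥ 1, and let x ∈ ℝ^{nγ} be k-sparse with block-sum vector x^γ ∈ ℝ^n, and set y = (1/√γ) A x^γ. Then x^γ is the unique solution of the ℓ₁ minimization problem min { ‖z‖₁ : (1/√γ) A z = y }: for every z ∈ ℝ^n with (1/√γ) A z = y and z ≠ x^γ, one has ‖x^γ‖₁ < ‖z‖₁. -/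
noncomputable section
open Matrix ENNReal

lemma ncard_support_le {n : ℕ} (v : Fin n → ℝ) (S : Finset (Fin n))
    (hs : ∀ i, v i ≠ 0 → i ∈ S) : (Function.support v).ncard ≤ S.card := by
  have h1 : Function.support v ⊆ ↑S := fun i hi => hs i hi
  calc (Function.support v).ncard ≤ (↑S : Set (Fin n)).ncard :=
        Set.ncard_le_ncard h1 S.finite_toSet
    _ = S.card := Set.ncard_coe_finset S

lemma sum_sq_pos {n : ℕ} {v : Fin n → ℝ} (hv : v ≠ 0) : 0 < ∑ j, v j ^ 2 := by
  obtain ⟨j, hj⟩ := Function.ne_iff.mp hv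
  exact Finset.sum_pos' (fun i _ => sq_nonneg _)
    ⟨j, Finset.mem_univ j, pow_pos (abs_pos.mpr hj) 2 |>.trans_le (by rw [sq_abs])⟩

lemma rip_cross {m n k : ℕ} {A : Matrix (Fin m) (Fin n) ℝ} {δ : ℝ} (hδ0 : 0 ≤ δ)
    (hRIP : RIP A (2*k) δ) {u v : Fin n → ℝ}
    (hu : (Function.support u).ncard ≤ k) (hv : (Function.support v).ncard ≤ k)
    (hdisj : ∀ i, u i = 0 ∨ v i = 0) :
    |∑ t, A.mulVec u t * A.mulVec v t|
      ≤ δ * (Real.sqrt (∑ j, u j ^ 2) * Real.sqrt (∑ j, v j ^ 2)) := by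
  by_cases hu0 : u = 0
  · simp [hu0, Matrix.mulVec_zero]
  by_cases hv0 : v = 0
  · simp [hv0, Matrix.mulVec_zero]
  set a := Real.sqrt (∑ j, u j ^ 2) with ha
  set b := Real.sqrt (∑ j, v j ^ 2) with hb
  have hasq : a ^ 2 = ∑ j, u j ^ 2 := Real.sq_sqrt (by positivity)
  have hbsq : b ^ 2 = ∑ j, v j ^ 2 := Real.sq_sqrt (by positivity)
  have hapos : 0 < a := Real.sqrt_pos.mpr (sum_sq_pos hu0)
  have hbpos : 0 < b := Real.sqrt_pos.mpr (sum_sq_pos hv0)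
  set SU := ∑ t, A.mulVec u t ^ 2 with hSU
  set SV := ∑ t, A.mulVec v t ^ 2 with hSV
  set P := ∑ t, A.mulVec u t * A.mulVec v t with hP
  have huv0 : ∀ j, u j * v j = 0 := fun j => by rcases hdisj j with h | h <;> simp [h]
  -- mulVec of linear combos
  have hmv : ∀ (c d : ℝ) (t : Fin m), A.mulVec (fun j => c * u j + d * v j) t
      = c * A.mulVec u t + d * A.mulVec v t := by
    intro c d t
    simp only [Matrix.mulVec, dotProduct, Finset.mul_sum, ← Finset.sum_add_distrib]
    exact Finset.sum_congr rfl fun s _ => by ring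
  have hexp : ∀ c d : ℝ, ∑ t, (A.mulVec (fun j => c * u j + d * v j) t) ^ 2
      = c ^ 2 * SU + d ^ 2 * SV + 2 * c * d * P := by
    intro c d
    simp only [hSU, hSV, hP, Finset.mul_sum, ← Finset.sum_add_distrib]
    exact Finset.sum_congr rfl fun t _ => by rw [hmv]; ring
  have hl2 : ∀ c d : ℝ, ∑ j, (c * u j + d * v j) ^ 2 = c ^ 2 * a ^ 2 + d ^ 2 * b ^ 2 := by
    intro c d
    rw [hasq, hbsq]
    simp only [Finset.mul_sum, ← Finset.sum_add_distrib]
    exact Finset.sum_congr rfl fun j _ => by linear_combination (2 * c * d) * huv0 j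
  have hsupp : ∀ c d : ℝ, (Function.support fun j => c * u j + d * v j).ncard ≤ 2 * k := by
    intro c d
    have hsub : (Function.support fun j => c * u j + d * v j)
        ⊆ Function.support u ∪ Function.support v := by
      intro j hj
      by_contra hno
      simp only [Set.mem_union, Function.mem_support, not_or, not_not] at hno
      exact hj (by simp [Function.mem_support, hno.1, hno.2])
    calc (Function.support fun j => c * u j + d * v j).ncard
        ≤ (Function.support u ∪ Function.support v).ncard :=
          Set.ncard_le_ncard hsub (Set.toFinite _)
      _ ≤ (Function.support u).ncard + (Function.support v).ncard := Set.ncard_union_le _ _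
      _ ≤ 2 * k := by omega
  have hRp := hRIP (fun j => a⁻¹ * u j + b⁻¹ * v j) (hsupp _ _)
  have hRm := hRIP (fun j => a⁻¹ * u j + (-b⁻¹) * v j) (hsupp _ _)
  rw [hexp, hl2] at hRp hRm
  have hainv : a⁻¹ ^ 2 * a ^ 2 = 1 := by field_simp
  have hbinv : b⁻¹ ^ 2 * b ^ 2 = 1 := by field_simp
  have h2 : a⁻¹ ^ 2 * a ^ 2 + (b⁻¹) ^ 2 * b ^ 2 = 2 := by rw [hainv, hbinv]; norm_num
  have h2' : a⁻¹ ^ 2 * a ^ 2 + (-b⁻¹) ^ 2 * b ^ 2 = 2 := by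
    rw [show ((-b⁻¹:ℝ)) ^ 2 = b⁻¹ ^ 2 by ring]; exact h2
  rw [h2] at hRp
  rw [h2'] at hRm
  -- from hRp.2 and hRm.1 : upper bound ; from hRp.1 and hRm.2 : lower bound
  have hub : a⁻¹ * b⁻¹ * P ≤ δ := by nlinarith [hRp.2, hRm.1]
  have hlb : -δ ≤ a⁻¹ * b⁻¹ * P := by nlinarith [hRp.1, hRm.2]
  have hkey : a * b * (a⁻¹ * b⁻¹ * P) = P := by
    have h1 : a * a⁻¹ = 1 := mul_inv_cancel₀ hapos.ne'
    have h2 : b * b⁻¹ = 1 := mul_inv_cancel₀ hbpos.ne'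
    calc a * b * (a⁻¹ * b⁻¹ * P) = (a * a⁻¹) * ((b * b⁻¹) * P) := by ring
      _ = P := by rw [h1, h2, one_mul, one_mul]
  have hab : (0:ℝ) ≤ a * b := le_of_lt (mul_pos hapos hbpos)
  rw [abs_le]
  constructor
  · have := mul_le_mul_of_nonneg_left hlb hab
    rw [hkey] at this
    calc -(δ * (a * b)) = a * b * (-δ) := by ring
      _ ≤ P := this
  · have := mul_le_mul_of_nonneg_left hub hab
    rw [hkey] at this
    calc P ≤ a * b * δ := this
      _ = δ * (a * b) := by ring

lemma sqrt_add_sqrt_le {a b : ℝ} (ha : 0 ≤ a) (hb : 0 ≤ b) :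
    Real.sqrt a + Real.sqrt b ≤ Real.sqrt 2 * Real.sqrt (a + b) := by
  have h1 : (Real.sqrt a + Real.sqrt b) ^ 2 ≤ (Real.sqrt 2 * Real.sqrt (a + b)) ^ 2 := by
    rw [mul_pow, Real.sq_sqrt (by norm_num : (0:ℝ) ≤ 2), Real.sq_sqrt (by linarith)]
    nlinarith [Real.sq_sqrt ha, Real.sq_sqrt hb, sq_nonneg (Real.sqrt a - Real.sqrt b)]
  nlinarith [Real.sqrt_nonneg a, Real.sqrt_nonneg b, Real.sqrt_nonneg 2,
    Real.sqrt_nonneg (a + b), mul_nonneg (Real.sqrt_nonneg 2) (Real.sqrt_nonneg (a + b))]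

lemma sum_le_sum_of_card_le {α : Type*} [DecidableEq α] {s t : Finset α} {f : α → ℝ}
    (hf : ∀ i, 0 ≤ f i) (hcard : t.card ≤ s.card)
    (hle : ∀ i ∈ t, ∀ j ∈ s, f i ≤ f j) :
    ∑ i ∈ t, f i ≤ ∑ j ∈ s, f j := by
  rcases s.eq_empty_or_nonempty with hs | hs
  · have ht : t = ∅ := by
      rw [hs, Finset.card_empty, Nat.le_zero, Finset.card_eq_zero] at hcard; exact hcard
    simp [ht, hs]
  · obtain ⟨j0, hj0, hmin⟩ := Finset.exists_min_image s f hs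
    calc ∑ i ∈ t, f i ≤ ∑ _i ∈ t, f j0 := Finset.sum_le_sum (fun i hi => hle i hi j0 hj0)
      _ = t.card * f j0 := by rw [Finset.sum_const, nsmul_eq_mul]
      _ ≤ s.card * f j0 := by
          apply mul_le_mul_of_nonneg_right _ (hf j0); exact_mod_cast hcard
      _ ≤ ∑ j ∈ s, f j := by
          rw [← nsmul_eq_mul]; exact Finset.card_nsmul_le_sum s f _ hmin

theorem rip_nsp {m n k : ℕ} (A : Matrix (Fin m) (Fin n) ℝ) {δ : ℝ}
    (hδ0 : 0 < δ) (hδ1 : δ < 1) (hδ : δ < Real.sqrt 2 - 1)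
    (hRIP : RIP A (2 * k) δ) (hk : 1 ≤ k)
    {h : Fin n → ℝ} (hh0 : h ≠ 0) (hker : A.mulVec h = 0)
    (T : Finset (Fin n)) (hT : T.card ≤ k) :
    ∑ i ∈ T, |h i| < ∑ i ∈ Tᶜ, |h i| := by
  classical
  obtain ⟨i₀, hi₀⟩ := Function.ne_iff.mp hh0
  have hn : 0 < n := i₀.pos
  have hk' : (0:ℝ) < k := by exact_mod_cast hk
  set σ := Tuple.sort (fun i : Fin n => -|h i|) with hσ
  have hmono := Tuple.monotone_sort (fun i : Fin n => -|h i|)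
  set pos : Fin n → ℕ := fun i => (σ.symm i : ℕ) with hposdef
  have hanti : ∀ i j : Fin n, pos i ≤ pos j → |h j| ≤ |h i| := by
    intro i j hij
    have h1 : σ.symm i ≤ σ.symm j := Fin.mk_le_mk.mpr hij
    have h2 := hmono h1
    simp only [Function.comp_apply, Equiv.apply_symm_apply, hσ] at h2
    linarith [h2]
  set B : ℕ → Finset (Fin n) := fun j => Finset.univ.filter (fun i => pos i / k = j) with hB
  have hmemB : ∀ (j : ℕ) (i : Fin n), i ∈ B j ↔ pos i / k = j := by
    intro j i; simp [hB]
  set P : ℕ → Fin n → ℝ := fun j i => if pos i / k = j then h i else 0 with hPdef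
  have hposlt : ∀ i, pos i < n := fun i => (σ.symm i).isLt
  set J := n + 2 with hJ
  have hdivlt : ∀ i : Fin n, pos i / k < J :=
    fun i => lt_of_le_of_lt (Nat.div_le_self _ _) (by have := hposlt i; omega)
  have hPsum : ∀ i, ∑ j ∈ Finset.range J, P j i = h i := by
    intro i
    rw [Finset.sum_eq_single_of_mem (pos i / k) (Finset.mem_range.mpr (hdivlt i))]
    · simp [hPdef]
    · intro j _ hne
      simp only [hPdef]
      exact if_neg (fun hc => hne hc.symm)
  have habs : ∀ j, ∑ i, |P j i| = ∑ i ∈ B j, |h i| := by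
    intro j
    rw [hB, Finset.sum_filter]
    exact Finset.sum_congr rfl fun i _ => by
      by_cases hc : pos i / k = j <;> simp [hPdef, hc]
  have hsq : ∀ j, ∑ i, (P j i) ^ 2 = ∑ i ∈ B j, (h i) ^ 2 := by
    intro j
    rw [hB, Finset.sum_filter]
    exact Finset.sum_congr rfl fun i _ => by
      by_cases hc : pos i / k = j <;> simp [hPdef, hc]
  have hcard : ∀ j, (B j).card ≤ k := by
    intro j
    have := Finset.card_le_card_of_injOn (fun i => pos i % k)
      (fun i _ => Finset.mem_range.mpr (Nat.mod_lt _ (by omega)))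
      (s := B j) (t := Finset.range k) ?_
    · simpa using this
    · intro i1 h1 i2 h2 he
      have e1 : pos i1 / k = j := (hmemB j i1).mp h1
      have e2 : pos i2 / k = j := (hmemB j i2).mp h2
      have he' : pos i1 % k = pos i2 % k := he
      have : pos i1 = pos i2 := by
        conv_lhs => rw [← Nat.div_add_mod (pos i1) k]
        conv_rhs => rw [← Nat.div_add_mod (pos i2) k]
        rw [e1, e2, he']
      have : σ.symm i1 = σ.symm i2 := Fin.val_injective this
      exact σ.symm.injective this
  have hfull : ∀ j, (∃ i : Fin n, (j + 1) * k ≤ pos i) → k ≤ (B j).card := by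
    rintro j ⟨i2, hi2⟩
    have hlt : ∀ p : ℕ, p < k → j * k + p < n := by
      intro p hp
      have h1 : j * k + p < (j + 1) * k := by
        have : (j + 1) * k = j * k + k := by ring
        omega
      exact lt_of_lt_of_le (lt_of_lt_of_le h1 hi2) (le_of_lt (hposlt i2))
    set f : Fin k → Fin n := fun p => σ ⟨j * k + (p : ℕ), hlt p p.isLt⟩ with hf
    have hmem : ∀ p : Fin k, f p ∈ B j := by
      intro p
      rw [hmemB]
      have : pos (f p) = j * k + (p : ℕ) := by
        simp [hf, hposdef, Equiv.symm_apply_apply]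
      rw [this, mul_comm j k, Nat.mul_add_div (by omega), Nat.div_eq_of_lt p.isLt]
      omega
    have hinj : Function.Injective f := by
      intro p q hpq
      have h1 := σ.injective hpq
      have h2 : j * k + (p : ℕ) = j * k + (q : ℕ) := congrArg Fin.val h1
      exact Fin.val_injective (by omega)
    calc k = (Finset.univ : Finset (Fin k)).card := by simp
      _ ≤ (B j).card := Finset.card_le_card_of_injOn f (fun p _ => hmem p) hinj.injOn
  set L1 : ℕ → ℝ := fun j => ∑ i ∈ B j, |h i| with hL1
  have hL1nn : ∀ j, 0 ≤ L1 j := fun j => Finset.sum_nonneg fun i _ => abs_nonneg _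
  have hdom : ∀ j, ∀ i ∈ B (j + 1), (k : ℝ) * |h i| ≤ L1 j := by
    intro j i hi
    have hji : pos i / k = j + 1 := (hmemB _ _).mp hi
    have hge : (j + 1) * k ≤ pos i := (Nat.le_div_iff_mul_le (by omega)).mp (le_of_eq hji.symm)
    have hib : ∀ i' ∈ B j, |h i| ≤ |h i'| := by
      intro i' hi'
      have hj' : pos i' / k = j := (hmemB _ _).mp hi'
      apply hanti
      have : pos i' < pos i := by
        by_contra hc
        push_neg at hc
        have := Nat.div_le_div_right (c := k) hc
        omega
      exact le_of_lt this
    have hcardfull : k ≤ (B j).card := hfull j ⟨i, hge⟩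
    calc (k : ℝ) * |h i| ≤ ((B j).card : ℝ) * |h i| := by
          apply mul_le_mul_of_nonneg_right _ (abs_nonneg _); exact_mod_cast hcardfull
      _ ≤ L1 j := by
          rw [← nsmul_eq_mul]; exact Finset.card_nsmul_le_sum (B j) _ _ hib
  have hL1next : ∀ j, L1 (j + 1) ≤ L1 j := by
    intro j
    calc L1 (j + 1) = ∑ i ∈ B (j + 1), |h i| := rfl
      _ ≤ ∑ _i ∈ B (j + 1), (L1 j / k) := Finset.sum_le_sum (fun i hi =>
          (le_div_iff₀ hk').mpr (by linarith [hdom j i hi]))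
      _ = ((B (j + 1)).card : ℝ) * (L1 j / k) := by rw [Finset.sum_const, nsmul_eq_mul]
      _ ≤ (k : ℝ) * (L1 j / k) := by
          apply mul_le_mul_of_nonneg_right _ (by positivity)
          exact_mod_cast hcard (j + 1)
      _ = L1 j := by field_simp
  have hsqnext : ∀ j, ∑ i ∈ B (j + 1), (h i) ^ 2 ≤ (L1 j) ^ 2 / k := by
    intro j
    calc ∑ i ∈ B (j + 1), (h i) ^ 2 = ∑ i ∈ B (j + 1), |h i| * |h i| := by
          exact Finset.sum_congr rfl fun i _ => by rw [← sq_abs, sq]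
      _ ≤ ∑ i ∈ B (j + 1), (L1 j / k) * |h i| := Finset.sum_le_sum fun i hi =>
          mul_le_mul_of_nonneg_right
            ((le_div_iff₀ hk').mpr (by linarith [hdom j i hi])) (abs_nonneg _)
      _ = (L1 j / k) * L1 (j + 1) := by rw [← Finset.mul_sum]
      _ ≤ (L1 j / k) * L1 j := by
          apply mul_le_mul_of_nonneg_left (hL1next j)
          positivity
      _ = (L1 j) ^ 2 / k := by ring
  set l2 : ℕ → ℝ := fun j => Real.sqrt (∑ i ∈ B j, (h i) ^ 2) with hl2
  have hl2nn : ∀ j, 0 ≤ l2 j := fun j => Real.sqrt_nonneg _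
  have hl2next : ∀ j, l2 (j + 1) ≤ L1 j / Real.sqrt k := by
    intro j
    calc l2 (j + 1) ≤ Real.sqrt ((L1 j) ^ 2 / k) := Real.sqrt_le_sqrt (hsqnext j)
      _ = L1 j / Real.sqrt k := by
          rw [Real.sqrt_div (sq_nonneg _), Real.sqrt_sq (hL1nn j)]
  set LT := ∑ j ∈ Finset.Ico 1 J, L1 j with hLTdef
  have hLTnn : 0 ≤ LT := Finset.sum_nonneg fun j _ => hL1nn j
  have hsk : 0 < Real.sqrt k := Real.sqrt_pos.mpr hk'
  have htail : ∑ j ∈ Finset.Ico 2 J, l2 j ≤ LT / Real.sqrt k := by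
    have step1 : ∑ j ∈ Finset.Ico 2 J, l2 j ≤ ∑ j ∈ Finset.Ico 2 J, L1 (j - 1) / Real.sqrt k := by
      apply Finset.sum_le_sum
      intro j hj
      have hj2 : 2 ≤ j := (Finset.mem_Ico.mp hj).1
      have he : j - 1 + 1 = j := by omega
      have := hl2next (j - 1)
      rw [he] at this
      exact this
    have step2 : ∑ j ∈ Finset.Ico 2 J, L1 (j - 1) ≤ LT := by
      rw [hLTdef]
      rw [show ∑ j ∈ Finset.Ico 2 J, L1 (j - 1)
          = ∑ j ∈ (Finset.Ico 2 J).image (· - 1), L1 j from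
        (Finset.sum_image (by intro a ha b hb hab
                              simp only [Finset.mem_coe, Finset.mem_Ico] at ha hb hab
                              omega)).symm]
      apply Finset.sum_le_sum_of_subset_of_nonneg
      · intro j hj
        simp only [Finset.mem_image, Finset.mem_Ico] at hj ⊢
        obtain ⟨a, ha, hae⟩ := hj
        omega
      · intro j _ _; exact hL1nn j
    calc ∑ j ∈ Finset.Ico 2 J, l2 j ≤ ∑ j ∈ Finset.Ico 2 J, L1 (j - 1) / Real.sqrt k := step1
      _ = (∑ j ∈ Finset.Ico 2 J, L1 (j - 1)) / Real.sqrt k := by rw [Finset.sum_div]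
      _ ≤ LT / Real.sqrt k := by
          exact div_le_div_of_nonneg_right step2 hsk.le
  -- supports of the pieces
  have hsuppP : ∀ j, (Function.support (P j)).ncard ≤ k := by
    intro j
    refine le_trans (ncard_support_le _ (B j) ?_) (hcard j)
    intro i hi
    rw [hmemB]
    by_contra hc
    exact hi (by simp only [hPdef]; exact if_neg hc)
  set h01 : Fin n → ℝ := fun i => P 0 i + P 1 i with h01def
  have hsupp01 : (Function.support h01).ncard ≤ 2 * k := by
    refine le_trans (ncard_support_le _ (B 0 ∪ B 1) ?_) ?_
    · intro i hi
      rw [Finset.mem_union, hmemB, hmemB]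
      by_contra hc
      push_neg at hc
      apply hi
      simp only [h01def, hPdef]
      rw [if_neg hc.1, if_neg hc.2, add_zero]
    · calc (B 0 ∪ B 1).card ≤ (B 0).card + (B 1).card := Finset.card_union_le _ _
        _ ≤ 2 * k := by have := hcard 0; have := hcard 1; omega
  set E2 := ∑ i, h01 i ^ 2 with hE2def
  have hE2nn : 0 ≤ E2 := Finset.sum_nonneg fun i _ => sq_nonneg _
  have hP01 : ∀ i, P 0 i * P 1 i = 0 := by
    intro i
    simp only [hPdef]
    by_cases hc : pos i / k = 0
    · rw [if_neg (by omega : ¬ pos i / k = 1), mul_zero]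
    · rw [if_neg hc, zero_mul]
  have hE2eq : E2 = (∑ i ∈ B 0, h i ^ 2) + ∑ i ∈ B 1, h i ^ 2 := by
    rw [hE2def, ← hsq 0, ← hsq 1, ← Finset.sum_add_distrib]
    exact Finset.sum_congr rfl fun i _ => by
      have := hP01 i
      simp only [h01def]
      linear_combination 2 * this
  set E := Real.sqrt E2 with hEdef
  have hEsq : E ^ 2 = E2 := Real.sq_sqrt hE2nn
  have hEnn : 0 ≤ E := Real.sqrt_nonneg _
  -- kernel decomposition
  have hAzero : ∀ t, ∑ j ∈ Finset.range J, A.mulVec (P j) t = 0 := by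
    intro t
    have hz : A.mulVec h t = 0 := by rw [hker]; rfl
    rw [← hz]
    simp only [Matrix.mulVec, dotProduct]
    rw [Finset.sum_comm]
    exact Finset.sum_congr rfl fun s _ => by rw [← Finset.mul_sum, hPsum s]
  have hmv01 : ∀ t, A.mulVec h01 t = A.mulVec (P 0) t + A.mulVec (P 1) t := by
    intro t
    simp only [h01def, Matrix.mulVec, dotProduct, mul_add, ← Finset.sum_add_distrib]
  have hA01 : ∀ t, A.mulVec h01 t = -(∑ j ∈ Finset.Ico 2 J, A.mulVec (P j) t) := by
    intro t
    have h0 := hAzero t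
    rw [Finset.range_eq_Ico, Finset.sum_eq_sum_Ico_succ_bot (by omega : 0 < J),
      Finset.sum_eq_sum_Ico_succ_bot (by omega : 1 < J)] at h0
    rw [hmv01 t]
    linarith [h0]
  have hl2P : ∀ j, Real.sqrt (∑ i, P j i ^ 2) = l2 j := fun j => by rw [hsq j]
  -- per-term bound
  have hterm : ∀ j ∈ Finset.Ico 2 J, ∑ t, -(A.mulVec h01 t * A.mulVec (P j) t)
      ≤ δ * (Real.sqrt 2 * E) * l2 j := by
    intro j hj
    have hj2 : 2 ≤ j := (Finset.mem_Ico.mp hj).1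
    have hd0 : ∀ i, P 0 i = 0 ∨ P j i = 0 := by
      intro i
      by_cases hc : pos i / k = 0
      · right; simp only [hPdef]; exact if_neg (by omega)
      · left; simp only [hPdef]; exact if_neg hc
    have hd1 : ∀ i, P 1 i = 0 ∨ P j i = 0 := by
      intro i
      by_cases hc : pos i / k = 1
      · right; simp only [hPdef]; exact if_neg (by omega)
      · left; simp only [hPdef]; exact if_neg hc
    have hc0 := rip_cross hδ0.le hRIP (hsuppP 0) (hsuppP j) hd0
    have hc1 := rip_cross hδ0.le hRIP (hsuppP 1) (hsuppP j) hd1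
    rw [hl2P, hl2P] at hc0 hc1
    have hdec : ∑ t, -(A.mulVec h01 t * A.mulVec (P j) t)
        = -((∑ t, A.mulVec (P 0) t * A.mulVec (P j) t)
            + (∑ t, A.mulVec (P 1) t * A.mulVec (P j) t)) := by
      rw [← Finset.sum_add_distrib, ← Finset.sum_neg_distrib]
      exact Finset.sum_congr rfl fun t _ => by rw [hmv01 t]; ring
    rw [hdec]
    have hb0 := abs_le.mp hc0
    have hb1 := abs_le.mp hc1
    have hsum2 : l2 0 + l2 1 ≤ Real.sqrt 2 * E := by
      have := sqrt_add_sqrt_le (Finset.sum_nonneg fun i (_ : i ∈ B 0) => sq_nonneg (h i))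
        (Finset.sum_nonneg fun i (_ : i ∈ B 1) => sq_nonneg (h i))
      rw [← hE2eq] at this
      exact this
    calc -((∑ t, A.mulVec (P 0) t * A.mulVec (P j) t)
            + (∑ t, A.mulVec (P 1) t * A.mulVec (P j) t))
        ≤ δ * (l2 0 * l2 j) + δ * (l2 1 * l2 j) := by linarith [hb0.1, hb1.1]
      _ = δ * ((l2 0 + l2 1) * l2 j) := by ring
      _ ≤ δ * ((Real.sqrt 2 * E) * l2 j) := by
          apply mul_le_mul_of_nonneg_left _ hδ0.le
          exact mul_le_mul_of_nonneg_right hsum2 (hl2nn j)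
      _ = δ * (Real.sqrt 2 * E) * l2 j := by ring
  -- inner product bound
  have hinner : ∑ t, (A.mulVec h01 t) ^ 2
      ≤ δ * (Real.sqrt 2 * E) * (∑ j ∈ Finset.Ico 2 J, l2 j) := by
    calc ∑ t, (A.mulVec h01 t) ^ 2
        = ∑ t, ∑ j ∈ Finset.Ico 2 J, -(A.mulVec h01 t * A.mulVec (P j) t) := by
          apply Finset.sum_congr rfl
          intro t _
          have hx : (A.mulVec h01 t) ^ 2
              = A.mulVec h01 t * -(∑ j ∈ Finset.Ico 2 J, A.mulVec (P j) t) := by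
            rw [← hA01 t]; ring
          rw [hx, mul_neg, Finset.mul_sum, ← Finset.sum_neg_distrib]
      _ = ∑ j ∈ Finset.Ico 2 J, ∑ t, -(A.mulVec h01 t * A.mulVec (P j) t) :=
          Finset.sum_comm
      _ ≤ ∑ j ∈ Finset.Ico 2 J, δ * (Real.sqrt 2 * E) * l2 j :=
          Finset.sum_le_sum hterm
      _ = δ * (Real.sqrt 2 * E) * (∑ j ∈ Finset.Ico 2 J, l2 j) := by
          rw [Finset.mul_sum]
  -- main estimate
  have hrip1 := (hRIP h01 hsupp01).1
  have hmain : (1 - δ) * E ^ 2 ≤ Real.sqrt 2 * δ * E * (LT / Real.sqrt k) := by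
    calc (1 - δ) * E ^ 2 = (1 - δ) * ∑ i, h01 i ^ 2 := by rw [hEsq, hE2def]
      _ ≤ ∑ t, (A.mulVec h01 t) ^ 2 := hrip1
      _ ≤ δ * (Real.sqrt 2 * E) * (∑ j ∈ Finset.Ico 2 J, l2 j) := hinner
      _ ≤ δ * (Real.sqrt 2 * E) * (LT / Real.sqrt k) := by
          apply mul_le_mul_of_nonneg_left htail
          positivity
      _ = Real.sqrt 2 * δ * E * (LT / Real.sqrt k) := by ring
  -- E is positive
  have hEpos : 0 < E := by
    have hi1lt : (0:ℕ) < n := hn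
    set i1 : Fin n := σ ⟨0, hn⟩ with hi1
    have hpos1 : pos i1 = 0 := by simp [hi1, hposdef, Equiv.symm_apply_apply]
    have hmem1 : i1 ∈ B 0 := by rw [hmemB, hpos1]; simp
    have hle1 : ∀ i : Fin n, |h i| ≤ |h i1| := fun i => hanti i1 i (by omega)
    have hne1 : h i1 ≠ 0 := by
      intro hc
      apply hi₀
      have := hle1 i₀
      rw [hc] at this
      simp only [abs_zero] at this
      have := abs_nonneg (h i₀)
      have : |h i₀| = 0 := le_antisymm (by linarith) (abs_nonneg _)
      simpa [abs_eq_zero] using this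
    have hsq0pos : 0 < ∑ i ∈ B 0, h i ^ 2 :=
      lt_of_lt_of_le (by positivity) (Finset.single_le_sum (f := fun i => h i ^ 2)
        (fun i _ => sq_nonneg _) hmem1)
    have hE2pos : 0 < E2 := by
      rw [hE2eq]
      have : 0 ≤ ∑ i ∈ B 1, h i ^ 2 := Finset.sum_nonneg fun i _ => sq_nonneg _
      linarith
    exact Real.sqrt_pos.mpr hE2pos
  have hEbound : (1 - δ) * E ≤ Real.sqrt 2 * δ * (LT / Real.sqrt k) := by
    have h' : ((1 - δ) * E) * E ≤ (Real.sqrt 2 * δ * (LT / Real.sqrt k)) * E := by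
      calc ((1 - δ) * E) * E = (1 - δ) * E ^ 2 := by ring
        _ ≤ Real.sqrt 2 * δ * E * (LT / Real.sqrt k) := hmain
        _ = (Real.sqrt 2 * δ * (LT / Real.sqrt k)) * E := by ring
    exact le_of_mul_le_mul_right h' hEpos
  have hδ2 : Real.sqrt 2 * δ < 1 - δ := by
    have h2 : Real.sqrt 2 ^ 2 = 2 := Real.sq_sqrt (by norm_num)
    nlinarith [mul_lt_mul_of_pos_right hδ (show (0:ℝ) < Real.sqrt 2 + 1 by positivity)]
  have hLTpos : 0 < LT := by
    rcases lt_or_ge 0 LT with hp | hp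
    · exact hp
    · exfalso
      have hLT0 : LT = 0 := le_antisymm hp hLTnn
      rw [hLT0] at hEbound
      simp only [zero_div, mul_zero] at hEbound
      nlinarith [hEpos, hδ1]
  -- Cauchy-Schwarz on block 0
  have hCS : (L1 0) ^ 2 ≤ (k : ℝ) * ∑ i ∈ B 0, h i ^ 2 := by
    calc (L1 0) ^ 2 = (∑ i ∈ B 0, |h i|) ^ 2 := rfl
      _ ≤ ((B 0).card : ℝ) * ∑ i ∈ B 0, |h i| ^ 2 := by
          exact_mod_cast sq_sum_le_card_mul_sum_sq (s := B 0) (f := fun i => |h i|)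
      _ = ((B 0).card : ℝ) * ∑ i ∈ B 0, h i ^ 2 := by
          congr 1
          exact Finset.sum_congr rfl fun i _ => sq_abs _
      _ ≤ (k : ℝ) * ∑ i ∈ B 0, h i ^ 2 := by
          apply mul_le_mul_of_nonneg_right _ (Finset.sum_nonneg fun i _ => sq_nonneg _)
          exact_mod_cast hcard 0
  have hL10 : L1 0 ≤ Real.sqrt k * E := by
    have h1 : (L1 0) ^ 2 ≤ (k : ℝ) * E2 := by
      refine le_trans hCS ?_
      rw [hE2eq]
      have h2 : 0 ≤ ∑ i ∈ B 1, h i ^ 2 := Finset.sum_nonneg fun i _ => sq_nonneg _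
      exact mul_le_mul_of_nonneg_left (le_add_of_nonneg_right h2) hk'.le
    calc L1 0 = Real.sqrt ((L1 0) ^ 2) := (Real.sqrt_sq (hL1nn 0)).symm
      _ ≤ Real.sqrt ((k : ℝ) * E2) := Real.sqrt_le_sqrt h1
      _ = Real.sqrt k * E := by rw [Real.sqrt_mul (le_of_lt hk'), hEdef]
  have hfinal : L1 0 < LT := by
    have h2 : (1 - δ) * L1 0 ≤ Real.sqrt 2 * δ * LT := by
      calc (1 - δ) * L1 0 ≤ (1 - δ) * (Real.sqrt k * E) :=
            mul_le_mul_of_nonneg_left hL10 (by linarith)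
        _ = Real.sqrt k * ((1 - δ) * E) := by ring
        _ ≤ Real.sqrt k * (Real.sqrt 2 * δ * (LT / Real.sqrt k)) :=
            mul_le_mul_of_nonneg_left hEbound hsk.le
        _ = Real.sqrt 2 * δ * LT * (Real.sqrt k / Real.sqrt k) := by ring
        _ = Real.sqrt 2 * δ * LT := by rw [div_self hsk.ne', mul_one]
    have h3 : Real.sqrt 2 * δ * LT < (1 - δ) * LT := mul_lt_mul_of_pos_right hδ2 hLTpos
    have h4 : (1 - δ) * L1 0 < (1 - δ) * LT := lt_of_le_of_lt h2 h3
    exact lt_of_mul_lt_mul_left h4 (by linarith)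
  -- top-k property
  have htop : ∑ i ∈ T, |h i| ≤ L1 0 := by
    have hsplitT : ∑ i ∈ T, |h i| = (∑ i ∈ T ∩ B 0, |h i|) + ∑ i ∈ T \ B 0, |h i| :=
      (Finset.sum_inter_add_sum_sdiff _ _ _).symm
    have hsplitB : L1 0 = (∑ i ∈ B 0 ∩ T, |h i|) + ∑ i ∈ B 0 \ T, |h i| :=
      (Finset.sum_inter_add_sum_sdiff _ _ _).symm
    rw [hsplitT, hsplitB, Finset.inter_comm]
    apply add_le_add_right
    rcases (T \ B 0).eq_empty_or_nonempty with he | ⟨i1, hi1⟩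
    · rw [he, Finset.sum_empty]
      exact Finset.sum_nonneg fun i _ => abs_nonneg _
    · have hi1' : pos i1 / k ≠ 0 := by
        have := (Finset.mem_sdiff.mp hi1).2
        rw [hmemB] at this
        exact this
      have hge1 : k ≤ pos i1 := by
        by_contra hc
        push_neg at hc
        exact hi1' (Nat.div_eq_of_lt hc)
      have hBfull : k ≤ (B 0).card := hfull 0 ⟨i1, by simpa using hge1⟩
      have hcard' : (T \ B 0).card ≤ (B 0 \ T).card := by
        have e1 := Finset.card_inter_add_card_sdiff T (B 0)
        have e2 := Finset.card_inter_add_card_sdiff (B 0) T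
        have e3 : (T ∩ B 0).card = (B 0 ∩ T).card := by rw [Finset.inter_comm]
        omega
      apply sum_le_sum_of_card_le (fun i => abs_nonneg (h i)) hcard'
      intro i hi i' hi'
      have hiB : pos i / k ≠ 0 := by
        have := (Finset.mem_sdiff.mp hi).2
        rw [hmemB] at this
        exact this
      have hgei : k ≤ pos i := by
        by_contra hc
        push_neg at hc
        exact hiB (Nat.div_eq_of_lt hc)
      have hi'B : pos i' / k = 0 := by
        have := (Finset.mem_sdiff.mp hi').1
        rw [hmemB] at this
        exact this
      have hlti' : pos i' < k := by
        by_contra hc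
        push_neg at hc
        have := Nat.div_le_div_right (c := k) hc
        rw [Nat.div_self (by omega)] at this
        omega
      exact hanti i' i (by omega)
  -- totals
  have hone : ∀ i, ∑ j ∈ Finset.range J, |P j i| = |h i| := by
    intro i
    rw [Finset.sum_eq_single_of_mem (pos i / k) (Finset.mem_range.mpr (hdivlt i))]
    · simp [hPdef]
    · intro j _ hne
      simp only [hPdef]
      rw [if_neg (fun hc => hne hc.symm), abs_zero]
  have htotal : ∑ j ∈ Finset.range J, L1 j = ∑ i, |h i| := by
    calc ∑ j ∈ Finset.range J, L1 j = ∑ j ∈ Finset.range J, ∑ i, |P j i| :=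
          Finset.sum_congr rfl fun j _ => (habs j).symm
      _ = ∑ i, ∑ j ∈ Finset.range J, |P j i| := Finset.sum_comm
      _ = ∑ i, |h i| := Finset.sum_congr rfl fun i _ => hone i
  have hsplit : ∑ j ∈ Finset.range J, L1 j = L1 0 + LT := by
    rw [Finset.range_eq_Ico, Finset.sum_eq_sum_Ico_succ_bot (by omega : 0 < J)]
  have hcomp : LT ≤ ∑ i ∈ Tᶜ, |h i| := by
    have htot : (∑ i ∈ T, |h i|) + ∑ i ∈ Tᶜ, |h i| = ∑ i, |h i| :=
      Finset.sum_add_sum_compl T _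
    have htoteq : ∑ i, |h i| = L1 0 + LT := by rw [← htotal, hsplit]
    linarith [htop]
  linarith [hfinal, htop, hcomp]

/-- If `A` satisfies the RIP of order `2k` with `δ_{2k} < √2 − 1`,
`x ∈ ℝ^{nγ}` is `k`-sparse and `y = (1/√γ) A x^γ`, then `x^γ` is the unique `ℓ₁`
minimizer among all solutions of `(1/√γ) A z = y`. -/
theorem rip_dkstp_l1_unique_minimizer {m n γ k : ℕ} (hγ : 1 ≤ γ)
    (A : Matrix (Fin m) (Fin n) ℝ) (δ : ℝ)
    (hδ0 : 0 < δ) (hδ1 : δ < 1) (hδ : δ < Real.sqrt 2 - 1) (hRIP : RIP A (2 * k) δ)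
    (x : Fin (n * γ) → ℝ) (hx : (Function.support x).ncard ≤ k)
    (y : Fin m → ℝ) (hy : y = (Real.sqrt (γ : ℝ))⁻¹ • A.mulVec (blockSum x)) :
    ∀ z : Fin n → ℝ, (Real.sqrt (γ : ℝ))⁻¹ • A.mulVec z = y → z ≠ blockSum x →
      (∑ j, |blockSum x j|) < ∑ j, |z j| := by

  classical
  intro z hz hne
  set x0 := blockSum x with hx0
  have hγpos : (0:ℝ) < Real.sqrt γ := Real.sqrt_pos.mpr (by exact_mod_cast hγ)
  have hAz : A.mulVec z = A.mulVec x0 := by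
    have heq : (Real.sqrt (γ : ℝ))⁻¹ • A.mulVec z = (Real.sqrt (γ : ℝ))⁻¹ • A.mulVec x0 :=
      hz.trans hy
    have hc : (Real.sqrt (γ : ℝ))⁻¹ ≠ 0 := inv_ne_zero hγpos.ne'
    funext t
    have := congrFun heq t
    simp only [Pi.smul_apply, smul_eq_mul] at this
    exact mul_left_cancel₀ hc this
  -- support of x as a Finset
  set Sx : Finset (Fin (n * γ)) := Finset.univ.filter (fun i => x i ≠ 0) with hSx
  have hSxsupp : Function.support x = ↑Sx := by
    ext i; simp [hSx, Function.mem_support]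
  have hSxcard : Sx.card ≤ k := by
    rw [← Set.ncard_coe_finset, ← hSxsupp]; exact hx
  -- k = 0 case
  rcases Nat.eq_zero_or_pos k with hk0 | hk
  · subst hk0
    have hx00 : x = 0 := by
      have : Function.support x = ∅ := by
        have hfin := (Function.support x).toFinite
        exact (Set.ncard_eq_zero hfin).mp (le_antisymm hx (Nat.zero_le _))
      exact Function.support_eq_empty_iff.mp this
    have hx0z : x0 = 0 := by
      funext j
      simp [hx0, blockSum, hx00]
    have hzne : z ≠ 0 := by rw [← hx0z]; exact hne
    obtain ⟨j, hj⟩ := Function.ne_iff.mp hzne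
    have : (0:ℝ) < ∑ j, |z j| :=
      Finset.sum_pos' (fun i _ => abs_nonneg _) ⟨j, Finset.mem_univ j, abs_pos.mpr hj⟩
    calc ∑ j, |x0 j| = 0 := by simp [hx0z]
      _ < ∑ j, |z j| := this
  -- main case
  · set T : Finset (Fin n) := Sx.image (fun i => (finProdFinEquiv.symm i).1) with hT
    have hTcard : T.card ≤ k := le_trans (Finset.card_image_le) hSxcard
    have hTx0 : ∀ j : Fin n, x0 j ≠ 0 → j ∈ T := by
      intro j hj
      have : ∃ i : Fin γ, x (finProdFinEquiv (j, i)) ≠ 0 := by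
        by_contra hcon
        push_neg at hcon
        exact hj (Finset.sum_eq_zero fun i _ => hcon i)
      obtain ⟨i, hi⟩ := this
      rw [hT, Finset.mem_image]
      exact ⟨finProdFinEquiv (j, i), by simp [hSx, hi], by simp⟩
    set h : Fin n → ℝ := fun j => z j - x0 j with hh
    have hh0 : h ≠ 0 := by
      intro hc
      apply hne
      funext j
      have := congrFun hc j
      simp only [hh, Pi.zero_apply] at this
      linarith
    have hker : A.mulVec h = 0 := by
      have : h = z - x0 := rfl
      rw [this, Matrix.mulVec_sub, hAz, sub_self]
    have hnsp := rip_nsp A hδ0 hδ1 hδ hRIP hk hh0 hker T hTcard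
    -- cone argument
    have hTzero : ∀ j ∈ Tᶜ, x0 j = 0 := by
      intro j hj
      by_contra hc
      exact (Finset.mem_compl.mp hj) (hTx0 j hc)
    have hz1 : ∑ j, |z j| = (∑ j ∈ T, |z j|) + ∑ j ∈ Tᶜ, |z j| :=
      (Finset.sum_add_sum_compl T _).symm
    have hx01 : ∑ j, |x0 j| = ∑ j ∈ T, |x0 j| := by
      rw [← Finset.sum_add_sum_compl T (fun j => |x0 j|)]
      have : ∑ j ∈ Tᶜ, |x0 j| = 0 :=
        Finset.sum_eq_zero fun j hj => by rw [hTzero j hj, abs_zero]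
      rw [this, add_zero]
    have hzc : ∑ j ∈ Tᶜ, |z j| = ∑ j ∈ Tᶜ, |h j| :=
      Finset.sum_congr rfl fun j hj => by rw [hh]; simp only [hTzero j hj, sub_zero]
    have hzT : ∑ j ∈ T, |x0 j| - ∑ j ∈ T, |h j| ≤ ∑ j ∈ T, |z j| := by
      rw [← Finset.sum_sub_distrib]
      apply Finset.sum_le_sum
      intro j _
      have : x0 j = z j - h j := by simp [hh]
      calc |x0 j| - |h j| ≤ |x0 j + h j| - 0 := by
            have h1 : |x0 j + h j| ≥ |x0 j| - |h j| := by
              have h2 : |x0 j + h j - h j| ≤ |x0 j + h j| + |h j| := abs_sub _ _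
              simp only [add_sub_cancel_right] at h2
              linarith
            linarith
        _ = |z j| := by rw [sub_zero]; congr 1; simp [hh]
    rw [hz1, hzc, hx01]
    linarith [hnsp, hzT]
end
end

section
/- Let A be an m×n real matrix with 1 ≤ m < n whose columns all have unit Euclidean norm. Then the mutual coherence of A satisfies the Welch lower bound: μ(A) ≥ √((n − m) / (m(n − 1))). -/
noncomputable section
open Matrix ENNReal

/-- Welch bound: for `1 ≤ m < n` and unit-norm columns,
`μ(A) ≥ √((n − m)/(m(n − 1)))`. -/
theorem welch_lower_bound {m n : ℕ} (hm : 1 ≤ m) (hmn : m < n)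
    (A : Matrix (Fin m) (Fin n) ℝ)
    (hA : ∀ j : Fin n, Real.sqrt (∑ i, A i j ^ 2) = 1) :
    Real.sqrt (((n : ℝ) - (m : ℝ)) / ((m : ℝ) * ((n : ℝ) - 1))) ≤ coherence A := by
  classical
  have hm' : (1:ℝ) ≤ m := by exact_mod_cast hm
  have hn2 : 2 ≤ n := lt_of_le_of_lt hm hmn
  have hn2' : (2:ℝ) ≤ n := by exact_mod_cast hn2
  have hmn' : (m:ℝ) < n := by exact_mod_cast hmn
  set g : Fin n → Fin n → ℝ := fun i j => ∑ t, A t i * A t j with hg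
  have hA' : ∀ j, ∑ i, A i j ^ 2 = 1 := by
    intro j
    have hnn : 0 ≤ ∑ i, A i j ^ 2 := Finset.sum_nonneg fun _ _ => sq_nonneg _
    have := hA j
    nlinarith [Real.sq_sqrt hnn]
  have hdiag : ∀ i, g i i = 1 := by
    intro i
    simpa [hg, sq] using hA' i
  set h : Fin m → Fin m → ℝ := fun s t => ∑ j, A s j * A t j with hh
  -- trace identity : ∑ (g i j)^2 = ∑ (h s t)^2
  set F : Fin n → Fin n → Fin m → Fin m → ℝ :=
    fun i j s t => (A s i * A t i) * (A s j * A t j) with hF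
  have expand : ∑ i, ∑ j, (g i j) ^ 2 = ∑ s, ∑ t, (h s t) ^ 2 := by
    have L : ∀ i j : Fin n, (g i j) ^ 2 = ∑ s, ∑ t, F i j s t := by
      intro i j
      rw [hg, hF, sq, Finset.sum_mul_sum]
      exact Finset.sum_congr rfl fun s _ => Finset.sum_congr rfl fun t _ => by ring
    have R : ∀ s t : Fin m, (h s t) ^ 2 = ∑ i, ∑ j, F i j s t := by
      intro s t
      rw [hh, hF, sq, Finset.sum_mul_sum]
    calc ∑ i, ∑ j, (g i j) ^ 2
        = ∑ i, ∑ j, ∑ s, ∑ t, F i j s t :=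
          Finset.sum_congr rfl fun i _ => Finset.sum_congr rfl fun j _ => L i j
      _ = ∑ i, ∑ s, ∑ j, ∑ t, F i j s t :=
          Finset.sum_congr rfl fun i _ =>
            Finset.sum_comm
      _ = ∑ s, ∑ i, ∑ j, ∑ t, F i j s t :=
          Finset.sum_comm
      _ = ∑ s, ∑ i, ∑ t, ∑ j, F i j s t :=
          Finset.sum_congr rfl fun s _ => Finset.sum_congr rfl fun i _ =>
            Finset.sum_comm
      _ = ∑ s, ∑ t, ∑ i, ∑ j, F i j s t :=
          Finset.sum_congr rfl fun s _ =>
            Finset.sum_comm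
      _ = ∑ s, ∑ t, (h s t) ^ 2 :=
          Finset.sum_congr rfl fun s _ => Finset.sum_congr rfl fun t _ => (R s t).symm
  have htr : ∑ s, h s s = (n : ℝ) := by
    have : ∑ s, h s s = ∑ s : Fin m, ∑ j : Fin n, A s j ^ 2 := by
      simp [hh, sq]
    rw [this, Finset.sum_comm]
    simp [hA']
  -- Cauchy-Schwarz on the diagonal
  have hCS : (n : ℝ) ^ 2 ≤ (m : ℝ) * ∑ s, (h s s) ^ 2 := by
    have := sq_sum_le_card_mul_sum_sq (s := (Finset.univ : Finset (Fin m)))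
      (f := fun s => h s s)
    simpa [htr] using this
  have hdiagle : ∑ s, (h s s) ^ 2 ≤ ∑ s, ∑ t, (h s t) ^ 2 := by
    refine Finset.sum_le_sum fun s _ => ?_
    exact Finset.single_le_sum (f := fun t => (h s t) ^ 2)
      (fun t _ => sq_nonneg _) (Finset.mem_univ s)
  have key : (n : ℝ) ^ 2 ≤ (m : ℝ) * ∑ i, ∑ j, (g i j) ^ 2 := by
    rw [expand]
    calc (n:ℝ)^2 ≤ (m:ℝ) * ∑ s, (h s s) ^ 2 := hCS
      _ ≤ (m:ℝ) * ∑ s, ∑ t, (h s t) ^ 2 :=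
        mul_le_mul_of_nonneg_left hdiagle (by positivity)
  -- split off the diagonal
  have hsplit : ∑ i, ∑ j, (g i j) ^ 2
      = (n : ℝ) + ∑ i, ∑ j ∈ Finset.univ.erase i, (g i j) ^ 2 := by
    have : ∀ i : Fin n, ∑ j, (g i j) ^ 2
        = 1 + ∑ j ∈ Finset.univ.erase i, (g i j) ^ 2 := by
      intro i
      rw [← Finset.add_sum_erase _ _ (Finset.mem_univ i), hdiag i, one_pow]
    rw [Finset.sum_congr rfl fun i _ => this i, Finset.sum_add_distrib]
    simp
  set c : ℝ := ((n : ℝ) - m) / ((m : ℝ) * ((n : ℝ) - 1)) with hc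
  have hmpos : (0:ℝ) < m := by linarith
  have hoff : (n : ℝ) * ((n : ℝ) - 1) * c
      ≤ ∑ i, ∑ j ∈ Finset.univ.erase i, (g i j) ^ 2 := by
    have hden : (m:ℝ) * ((n:ℝ) - 1) ≠ 0 := by
      have : (0:ℝ) < (m:ℝ) * ((n:ℝ) - 1) := by nlinarith
      exact ne_of_gt this
    have hceq : c * ((m:ℝ) * ((n:ℝ) - 1)) = (n:ℝ) - m := div_mul_cancel₀ _ hden
    have h3 : (m:ℝ) * ((n:ℝ) * ((n:ℝ) - 1) * c) = (n:ℝ) * ((n:ℝ) - m) := by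
      rw [← hceq]; ring
    rw [hsplit, mul_add] at key
    have h4 : (n:ℝ) * ((n:ℝ) - m)
        ≤ (m:ℝ) * ∑ i, ∑ j ∈ Finset.univ.erase i, (g i j) ^ 2 := by nlinarith
    exact le_of_mul_le_mul_left (by linarith) hmpos
  -- find a good pair
  have hex : ∃ i j : Fin n, i ≠ j ∧ c ≤ (g i j) ^ 2 := by
    by_contra hcon
    push_neg at hcon
    haveI : Nonempty (Fin n) := ⟨⟨0, by omega⟩⟩
    have hlt : ∑ i, ∑ j ∈ Finset.univ.erase i, (g i j) ^ 2
        < ∑ i : Fin n, ∑ _j ∈ (Finset.univ : Finset (Fin n)).erase i, c := by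
      refine Finset.sum_lt_sum_of_nonempty ?_ fun i _ => ?_
      · exact Finset.univ_nonempty
      refine Finset.sum_lt_sum_of_nonempty ?_ fun j hj => ?_
      · rw [← Finset.card_pos, Finset.card_erase_of_mem (Finset.mem_univ i),
          Finset.card_univ, Fintype.card_fin]
        omega
      · exact hcon i j (Finset.ne_of_mem_erase hj).symm
    have hcard : ∑ i : Fin n, ∑ _j ∈ (Finset.univ : Finset (Fin n)).erase i, c
        = (n : ℝ) * ((n : ℝ) - 1) * c := by
      simp only [Finset.sum_const, Finset.card_erase_of_mem (Finset.mem_univ _),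
        Finset.card_univ, Fintype.card_fin, nsmul_eq_mul, Finset.sum_const]
      push_cast [Nat.cast_sub (by omega : 1 ≤ n)]
      ring
    rw [hcard] at hlt
    exact absurd hoff (not_le.2 hlt)
  obtain ⟨i, j, hij, hcle⟩ := hex
  -- conclude via sSup
  have hmem : |g i j| ∈ {r : ℝ | ∃ i j : Fin n, i ≠ j ∧
      r = |∑ t, A t i * A t j| /
        (Real.sqrt (∑ t, A t i ^ 2) * Real.sqrt (∑ t, A t j ^ 2))} := by
    exact ⟨i, j, hij, by simp [hA, hg]⟩
  have hbdd : BddAbove {r : ℝ | ∃ i j : Fin n, i ≠ j ∧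
      r = |∑ t, A t i * A t j| /
        (Real.sqrt (∑ t, A t i ^ 2) * Real.sqrt (∑ t, A t j ^ 2))} := by
    apply Set.Finite.bddAbove
    apply Set.Finite.subset (Set.finite_range (fun p : Fin n × Fin n =>
      |∑ t, A t p.1 * A t p.2| /
        (Real.sqrt (∑ t, A t p.1 ^ 2) * Real.sqrt (∑ t, A t p.2 ^ 2))))
    rintro r ⟨i, j, _, rfl⟩
    exact ⟨(i, j), rfl⟩
  have hle : Real.sqrt c ≤ |g i j| := by
    calc Real.sqrt c ≤ Real.sqrt ((g i j) ^ 2) := Real.sqrt_le_sqrt hcle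
      _ = |g i j| := Real.sqrt_sq_eq_abs _
  exact hle.trans (le_csSup hbdd hmem)
end
end
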